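/- arXiv:2101.12513 — 7 statements merged into one kernel-verified Lean document; each statement's English description precedes it below -/
import Mathlib

section
/- Let α > 0, β > 0, C* > 0, p > 0 and c ∈ (0,1]. Let f : [0,∞) → ℝ be non-increasing with c(1+r)^{−p} ≤ f(r) ≤ 1/4 for all r ≥ 0, and for each r ≥ 0 let t₀(r) > 0 be the unique positive solution of exp(−C*·t₀(r)·f(r)^{−α}) = t₀(r)·(1+r)^{−β}. Then there exist constants c₁, c₂ > 0 such that c₁·f(r)^α·log(2+r) ≤ t₀(r) ≤ c₂·f(r)^α·log(2+r) for all r ≥ 0. -/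
/-- Let `α, β, C*, p > 0` and `c ∈ (0,1]`. Let `f` be non-increasing on `[0,∞)` with
`c*(1+r)^(-p) ≤ f r ≤ 1/4` for all `r ≥ 0`, and for each `r ≥ 0` let `t₀ r > 0` solve
`exp (-(C* * t₀ r * (f r)^(-α))) = t₀ r * (1+r)^(-β)`.  Then there are constants
`c₁, c₂ > 0` with `c₁ * f r ^ α * log (2+r) ≤ t₀ r ≤ c₂ * f r ^ α * log (2+r)`
for all `r ≥ 0`. -/
theorem stmt3 (α β Cstar p c : ℝ) (hα : 0 < α) (hβ : 0 < β) (hCstar : 0 < Cstar)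
    (hp : 0 < p) (hc0 : 0 < c) (hc1 : c ≤ 1)
    (f : ℝ → ℝ) (hmono : ∀ r s : ℝ, 0 ≤ r → r ≤ s → f s ≤ f r)
    (hlow : ∀ r : ℝ, 0 ≤ r → c * (1 + r) ^ (-p) ≤ f r)
    (hupp : ∀ r : ℝ, 0 ≤ r → f r ≤ 1 / 4)
    (t₀ : ℝ → ℝ) (ht₀pos : ∀ r : ℝ, 0 ≤ r → 0 < t₀ r)
    (ht₀eq : ∀ r : ℝ, 0 ≤ r →
      Real.exp (-(Cstar * t₀ r * f r ^ (-α))) = t₀ r * (1 + r) ^ (-β)) :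
    ∃ c₁ c₂ : ℝ, 0 < c₁ ∧ 0 < c₂ ∧ ∀ r : ℝ, 0 ≤ r →
      c₁ * (f r ^ α * Real.log (2 + r)) ≤ t₀ r ∧
      t₀ r ≤ c₂ * (f r ^ α * Real.log (2 + r)) := by
  have hlog2 : 0 < Real.log 2 := Real.log_pos (by norm_num)
  have hlogc : Real.log c ≤ 0 := Real.log_nonpos hc0.le hc1
  -- constants
  set B : ℝ := |Real.log Cstar| + α * (-Real.log c) with hBdef
  clear_value B
  have hB0 : 0 ≤ B := by
    rw [hBdef]
    have h1 := abs_nonneg (Real.log Cstar)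
    have h2 := mul_nonneg hα.le (neg_nonneg.mpr hlogc)
    linarith
  set K : ℝ := β + α * p + (B + 1) / Real.log 2 with hKdef
  clear_value K
  have hKpos : 0 < K := by
    have h1 : 0 < α * p := mul_pos hα hp
    have h2 : 0 < (B + 1) / Real.log 2 := div_pos (by linarith) hlog2
    linarith
  set m : ℝ := Real.log Cstar + α * Real.log 4 with hmdef
  clear_value m
  set M : ℝ := β / 4 * Real.log 2 + 1 + Real.log (β / 4) with hMdef
  clear_value M
  set k : ℝ := min (β / 2) (Real.exp (M - β * Real.log 2 + m)) with hkdef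
  clear_value k
  have hkpos : 0 < k := by rw [hkdef]; exact lt_min (half_pos hβ) (Real.exp_pos _)
  refine ⟨k / Cstar, K / Cstar, div_pos hkpos hCstar, div_pos hKpos hCstar,
    fun r hr => ?_⟩
  have h1r : (0 : ℝ) < 1 + r := by linarith
  have h2r : (0 : ℝ) < 2 + r := by linarith
  have hfr : 0 < f r :=
    lt_of_lt_of_le (mul_pos hc0 (Real.rpow_pos_of_pos h1r _)) (hlow r hr)
  have hF : 0 < f r ^ (-α) := Real.rpow_pos_of_pos hfr _
  have ht : 0 < t₀ r := ht₀pos r hr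
  set u : ℝ := Cstar * t₀ r * f r ^ (-α) with hudef
  have hu : 0 < u := by rw [hudef]; positivity
  clear_value u
  set L : ℝ := Real.log (2 + r) with hLdef
  clear_value L
  have hL : Real.log 2 ≤ L := by
    rw [hLdef]; exact Real.log_le_log (by norm_num) (by linarith)
  have hLpos : 0 < L := lt_of_lt_of_le hlog2 hL
  have hL1 : Real.log (1 + r) ≤ L := by
    rw [hLdef]; exact Real.log_le_log h1r (by linarith)
  have hL2 : L ≤ Real.log 2 + Real.log (1 + r) := by
    have h := Real.log_le_log h2r (show (2 : ℝ) + r ≤ 2 * (1 + r) by linarith)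
    rw [Real.log_mul (by norm_num) h1r.ne'] at h
    rw [hLdef]; exact h
  have hlr0 : 0 ≤ Real.log (1 + r) := Real.log_nonneg (by linarith)
  -- key equation : u + log u = β log(1+r) + log Cstar - α log (f r)
  have heq := ht₀eq r hr
  have hlogeq := congrArg Real.log heq
  rw [Real.log_exp, Real.log_mul ht.ne' (Real.rpow_pos_of_pos h1r _).ne',
    Real.log_rpow h1r] at hlogeq
  have hlogu : Real.log u =
      Real.log Cstar + Real.log (t₀ r) + -α * Real.log (f r) := by
    rw [hudef, Real.log_mul (by positivity) hF.ne',
      Real.log_mul hCstar.ne' ht.ne', Real.log_rpow hfr]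
  have key : u + Real.log u =
      β * Real.log (1 + r) + Real.log Cstar - α * Real.log (f r) := by
    rw [hlogu]; linarith [hlogeq]
  -- bounds on log (f r)
  have hfu : Real.log (f r) ≤ -Real.log 4 := by
    have h := Real.log_le_log hfr (hupp r hr)
    rwa [show (1 : ℝ) / 4 = 4⁻¹ by norm_num, Real.log_inv] at h
  have hfl : Real.log c - p * Real.log (1 + r) ≤ Real.log (f r) := by
    have h := Real.log_le_log (mul_pos hc0 (Real.rpow_pos_of_pos h1r _)) (hlow r hr)
    rwa [Real.log_mul hc0.ne' (Real.rpow_pos_of_pos h1r _).ne',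
      Real.log_rpow h1r, neg_mul] at h
  -- upper bound : u ≤ K * L
  have hupper : u ≤ K * L := by
    have hRub : β * Real.log (1 + r) + Real.log Cstar - α * Real.log (f r)
        ≤ (β + α * p) * L + B := by
      have h3 : -(α * Real.log (f r)) ≤ α * (-Real.log c) + α * p * Real.log (1 + r) := by
        have := mul_le_mul_of_nonneg_left hfl hα.le
        linarith [this]
      have h4 : β * Real.log (1 + r) ≤ β * L := mul_le_mul_of_nonneg_left hL1 hβ.le
      have h5 : α * p * Real.log (1 + r) ≤ α * p * L :=
        mul_le_mul_of_nonneg_left hL1 (by positivity)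
      have h6 : Real.log Cstar ≤ |Real.log Cstar| := le_abs_self _
      have h3' : (β + α * p) * L = β * L + α * p * L := by ring
      linarith
    have h7 : (B + 1) / Real.log 2 * Real.log 2 = B + 1 :=
      div_mul_cancel₀ _ hlog2.ne'
    have h8 : (B + 1) / Real.log 2 * Real.log 2 ≤ (B + 1) / Real.log 2 * L :=
      mul_le_mul_of_nonneg_left hL (by positivity)
    have h10 : K * L = (β + α * p) * L + (B + 1) / Real.log 2 * L := by
      rw [hKdef]; ring
    have h11 : 0 ≤ (β + α * p) * L := by
      have := mul_pos hα hp
      have h12 : 0 ≤ β + α * p := by linarith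
      exact mul_nonneg h12 hLpos.le
    rcases le_or_gt u 1 with h | h
    · linarith
    · have h9 : 0 < Real.log u := Real.log_pos h
      linarith
  -- lower bound : u ≥ k * L
  have hlower : k * L ≤ u := by
    have hk1 : k ≤ β / 2 := hkdef ▸ min_le_left _ _
    have hk2 : Real.log k ≤ M - β * Real.log 2 + m := by
      calc Real.log k ≤ Real.log (Real.exp (M - β * Real.log 2 + m)) :=
            Real.log_le_log hkpos (hkdef ▸ min_le_right _ _)
        _ = M - β * Real.log 2 + m := Real.log_exp _
    have hlogL : Real.log L ≤ β / 4 * L - 1 - Real.log (β / 4) := by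
      have h5 : Real.log (β / 4 * L) ≤ β / 4 * L - 1 :=
        Real.log_le_sub_one_of_pos (by positivity)
      rw [Real.log_mul (by positivity) hLpos.ne'] at h5
      linarith
    have hlogkL : Real.log (k * L) = Real.log k + Real.log L :=
      Real.log_mul hkpos.ne' hLpos.ne'
    have hkL : k * L ≤ β / 2 * L := mul_le_mul_of_nonneg_right hk1 hLpos.le
    have hRlb : β * (L - Real.log 2) + m ≤
        β * Real.log (1 + r) + Real.log Cstar - α * Real.log (f r) := by
      have h10 : β * (L - Real.log 2) ≤ β * Real.log (1 + r) :=
        mul_le_mul_of_nonneg_left (by linarith) hβ.le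
      have h11 : α * Real.log 4 ≤ -(α * Real.log (f r)) := by
        have := mul_le_mul_of_nonneg_left hfu hα.le
        linarith [this]
      rw [hmdef]; linarith
    have hchain : k * L + Real.log (k * L) ≤
        β * Real.log (1 + r) + Real.log Cstar - α * Real.log (f r) := by
      rw [hlogkL]
      have hβL : β / 4 * Real.log 2 ≤ β / 4 * L :=
        mul_le_mul_of_nonneg_left hL (by positivity)
      rw [hMdef] at hk2
      linarith
    by_contra hcon
    push_neg at hcon
    have h12 : Real.log u < Real.log (k * L) := Real.log_lt_log hu hcon
    linarith [key]
  -- convert to t₀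
  have hinv : f r ^ (-α) * f r ^ α = 1 := by
    rw [← Real.rpow_add hfr]; norm_num
  have hfa : 0 < f r ^ α := Real.rpow_pos_of_pos hfr _
  have ht0eq : t₀ r = u * f r ^ α / Cstar := by
    have h7 : u * f r ^ α = Cstar * t₀ r := by
      rw [hudef, mul_assoc, hinv, mul_one]
    rw [h7, mul_comm, mul_div_assoc, div_self hCstar.ne', mul_one]
  constructor
  · calc k / Cstar * (f r ^ α * L) = k * L * f r ^ α / Cstar := by ring
      _ ≤ u * f r ^ α / Cstar := by gcongr
      _ = t₀ r := ht0eq.symm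
  · calc t₀ r = u * f r ^ α / Cstar := ht0eq
      _ ≤ K * L * f r ^ α / Cstar := by gcongr
      _ = K / Cstar * (f r ^ α * L) := by ring
end

section
/- Let α ∈ (0,2), θ > 1/α and let d ≥ 2 be an integer. With f(s) := (log(2+s))^{−θ}, g(s) := (log(2+s))^{1−θα}, g⁻¹(t) := inf{s ≥ 0 : g(s) ≤ t} and s₁(t) := max(g⁻¹(t), 2), the following holds: for all constants c₁, c₂, c₃ > 0 there exist c₄, c₅ > 0 such that for all t ∈ (0,1], ∫₀^{c₁·s₁(c₂·t)} (log(2+s))^{−θ(d−1)}·exp(−c₃·t·(log(2+s))^{θα}) ds ≤ c₄·exp(c₅·t^{−1/(θα−1)}). -/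
open MeasureTheory

/-- Upper bound for the long-time integral appearing in Example 1.6: with
`f s = (log (2+s))^(-θ)`, `g s = (log (2+s))^(1-θα)`, `g⁻¹ t = inf {s ≥ 0 : g s ≤ t}`
and `s₁ t = max (g⁻¹ t) 2`, for all `c₁, c₂, c₃ > 0` there are `c₄, c₅ > 0` such that
for all `t ∈ (0,1]`,
`∫₀^{c₁ s₁(c₂ t)} (log (2+s))^(-θ(d-1)) * exp (-c₃ t (log (2+s))^(θα)) ds
  ≤ c₄ * exp (c₅ * t^(-1/(θα-1)))`. -/
theorem stmt8 (α θ : ℝ) (d : ℕ) (hα0 : 0 < α) (hα2 : α < 2) (hθ : 1 / α < θ)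
    (hd : 2 ≤ d)
    (f g ginv s₁ : ℝ → ℝ)
    (hf : ∀ s : ℝ, f s = Real.log (2 + s) ^ (-θ))
    (hg : ∀ s : ℝ, g s = Real.log (2 + s) ^ (1 - θ * α))
    (hginv : ∀ t : ℝ, ginv t = sInf {s : ℝ | 0 ≤ s ∧ g s ≤ t})
    (hs₁ : ∀ t : ℝ, s₁ t = max (ginv t) 2)
    (c₁ c₂ c₃ : ℝ) (hc₁ : 0 < c₁) (hc₂ : 0 < c₂) (hc₃ : 0 < c₃) :
    ∃ c₄ c₅ : ℝ, 0 < c₄ ∧ 0 < c₅ ∧ ∀ t : ℝ, 0 < t → t ≤ 1 →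
      (∫ s in (0:ℝ)..(c₁ * s₁ (c₂ * t)),
          Real.log (2 + s) ^ (-(θ * ((d : ℝ) - 1))) *
            Real.exp (-(c₃ * t * Real.log (2 + s) ^ (θ * α)))) ≤
        c₄ * Real.exp (c₅ * t ^ (-1 / (θ * α - 1))) := by
  have hθα1 : 1 < θ * α := by
    have := (div_lt_iff₀ hα0).mp hθ
    linarith
  have hθpos : 0 < θ := lt_trans (by positivity) hθ
  have hp : θ * α - 1 ≠ 0 := by linarith
  set p : ℝ := -1 / (θ * α - 1) with hpdef
  have hlog2 : (0:ℝ) < Real.log 2 := Real.log_pos (by norm_num)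
  set M : ℝ := Real.log 2 ^ (-(θ * ((d : ℝ) - 1))) with hM
  have hMpos : 0 < M := Real.rpow_pos_of_pos hlog2 _
  refine ⟨3 * c₁ * M, c₂ ^ p, by positivity, Real.rpow_pos_of_pos hc₂ p, ?_⟩
  intro t ht ht1
  set u : ℝ := c₂ * t with hu
  have hupos : 0 < u := by positivity
  set E : ℝ := u ^ p with hE
  have hEpos : 0 < E := Real.rpow_pos_of_pos hupos p
  -- ginv u ≤ exp E
  have hginv_le : ginv u ≤ Real.exp E := by
    rw [hginv]
    set s' : ℝ := max (Real.exp E - 2) 0 with hs'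
    have hs'mem : s' ∈ {s : ℝ | 0 ≤ s ∧ g s ≤ u} := by
      constructor
      · exact le_max_right _ _
      · have h2s : Real.exp E ≤ 2 + s' := by
          rcases le_or_gt (Real.exp E - 2) 0 with h | h
          · have : s' = 0 := max_eq_right h
            rw [this]; linarith
          · have : Real.exp E - 2 ≤ s' := le_max_left _ _
            linarith
        have hlogE : E ≤ Real.log (2 + s') := by
          have := Real.log_le_log (Real.exp_pos E) h2s
          rwa [Real.log_exp] at this
        rw [hg]
        have h1 : Real.log (2 + s') ^ (1 - θ * α) ≤ E ^ (1 - θ * α) :=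
          Real.rpow_le_rpow_of_nonpos hEpos hlogE (by linarith)
        have h2 : E ^ (1 - θ * α) = u := by
          rw [hE, ← Real.rpow_mul hupos.le]
          have : p * (1 - θ * α) = 1 := by
            rw [hpdef]; field_simp; ring
          rw [this, Real.rpow_one]
        linarith
    have hbdd : BddBelow {s : ℝ | 0 ≤ s ∧ g s ≤ u} := ⟨0, fun x hx => hx.1⟩
    have h1 : sInf {s : ℝ | 0 ≤ s ∧ g s ≤ u} ≤ s' := csInf_le hbdd hs'mem
    have h2 : s' ≤ Real.exp E := by
      apply max_le _ (Real.exp_pos E).le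
      linarith
    linarith
  have hexpE1 : (1:ℝ) ≤ Real.exp E := by
    have := Real.exp_pos E
    nlinarith [Real.add_one_le_exp E]
  have hs₁le : s₁ u ≤ 3 * Real.exp E := by
    rw [hs₁]
    apply max_le
    · linarith
    · linarith
  have hs₁2 : (2:ℝ) ≤ s₁ u := by rw [hs₁]; exact le_max_right _ _
  set L : ℝ := c₁ * s₁ u with hL
  have hLpos : 0 < L := by
    have : (0:ℝ) < s₁ u := by linarith
    positivity
  -- bound the integrand on (0, L]
  have hbound : ∀ s ∈ Set.uIoc (0:ℝ) L,
      ‖Real.log (2 + s) ^ (-(θ * ((d : ℝ) - 1))) *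
        Real.exp (-(c₃ * t * Real.log (2 + s) ^ (θ * α)))‖ ≤ M := by
    intro s hs
    rw [Set.uIoc_of_le hLpos.le] at hs
    have hs0 : 0 < s := hs.1
    have hlog : Real.log 2 ≤ Real.log (2 + s) :=
      Real.log_le_log (by norm_num) (by linarith)
    have hlogpos : 0 < Real.log (2 + s) := lt_of_lt_of_le hlog2 hlog
    have hA : Real.log (2 + s) ^ (-(θ * ((d : ℝ) - 1))) ≤ M := by
      apply Real.rpow_le_rpow_of_nonpos hlog2 hlog
      have hd1 : (1:ℝ) ≤ (d:ℝ) := by exact_mod_cast Nat.one_le_of_lt hd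
      nlinarith
    have hB : Real.exp (-(c₃ * t * Real.log (2 + s) ^ (θ * α))) ≤ 1 := by
      apply Real.exp_le_one_iff.mpr
      have h0 : 0 ≤ c₃ * t * Real.log (2 + s) ^ (θ * α) :=
        mul_nonneg (mul_nonneg hc₃.le ht.le) (Real.rpow_nonneg hlogpos.le _)
      linarith
    have hApos : 0 ≤ Real.log (2 + s) ^ (-(θ * ((d : ℝ) - 1))) :=
      Real.rpow_nonneg hlogpos.le _
    rw [Real.norm_eq_abs, abs_of_nonneg (by positivity)]
    calc Real.log (2 + s) ^ (-(θ * ((d : ℝ) - 1))) *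
          Real.exp (-(c₃ * t * Real.log (2 + s) ^ (θ * α)))
        ≤ Real.log (2 + s) ^ (-(θ * ((d : ℝ) - 1))) * 1 :=
          mul_le_mul_of_nonneg_left hB hApos
      _ = Real.log (2 + s) ^ (-(θ * ((d : ℝ) - 1))) := mul_one _
      _ ≤ M := hA
  have hnorm := intervalIntegral.norm_integral_le_of_norm_le_const hbound
  have hint : (∫ s in (0:ℝ)..L,
      Real.log (2 + s) ^ (-(θ * ((d : ℝ) - 1))) *
        Real.exp (-(c₃ * t * Real.log (2 + s) ^ (θ * α)))) ≤ M * L := by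
    calc (∫ s in (0:ℝ)..L,
        Real.log (2 + s) ^ (-(θ * ((d : ℝ) - 1))) *
          Real.exp (-(c₃ * t * Real.log (2 + s) ^ (θ * α))))
        ≤ ‖∫ s in (0:ℝ)..L,
            Real.log (2 + s) ^ (-(θ * ((d : ℝ) - 1))) *
              Real.exp (-(c₃ * t * Real.log (2 + s) ^ (θ * α)))‖ :=
          le_abs_self _
      _ ≤ M * |L - 0| := hnorm
      _ = M * L := by rw [sub_zero, abs_of_nonneg hLpos.le]
  have hEeq : E = c₂ ^ p * t ^ p := by
    rw [hE, hu, Real.mul_rpow hc₂.le ht.le]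
  calc (∫ s in (0:ℝ)..L,
      Real.log (2 + s) ^ (-(θ * ((d : ℝ) - 1))) *
        Real.exp (-(c₃ * t * Real.log (2 + s) ^ (θ * α))))
      ≤ M * L := hint
    _ ≤ M * (c₁ * (3 * Real.exp E)) := by
        apply mul_le_mul_of_nonneg_left _ hMpos.le
        rw [hL]
        exact mul_le_mul_of_nonneg_left hs₁le hc₁.le
    _ = 3 * c₁ * M * Real.exp E := by ring
    _ = 3 * c₁ * M * Real.exp (c₂ ^ p * t ^ p) := by rw [hEeq]
end

section
/- Let α ∈ (0,2), θ > 1/α and let d ≥ 2 be an integer. With f(s) := (log(2+s))^{−θ}, g(s) := (log(2+s))^{1−θα}, g⁻¹(t) := inf{s ≥ 0 : g(s) ≤ t} and s₁(t) := max(g⁻¹(t), 2), the following holds: for all constants c₁, c₂, c₃ > 0 there exist c₆, c₇ > 0 such that for all t ∈ (0,1], ∫₀^{c₁·s₁(c₂·t)} (log(2+s))^{−θ(d−1)}·exp(−c₃·t·(log(2+s))^{θα}) ds ≥ c₆·exp(c₇·t^{−1/(θα−1)}). -/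
open MeasureTheory

set_option maxHeartbeats 2000000 in
/-- Lower bound for the long-time integral appearing in Example 1.6: with
`f s = (log (2+s))^(-θ)`, `g s = (log (2+s))^(1-θα)`, `g⁻¹ t = inf {s ≥ 0 : g s ≤ t}`
and `s₁ t = max (g⁻¹ t) 2`, for all `c₁, c₂, c₃ > 0` there are `c₆, c₇ > 0` such that
for all `t ∈ (0,1]`,
`∫₀^{c₁ s₁(c₂ t)} (log (2+s))^(-θ(d-1)) * exp (-c₃ t (log (2+s))^(θα)) ds
  ≥ c₆ * exp (c₇ * t^(-1/(θα-1)))`. -/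
theorem stmt9 (α θ : ℝ) (d : ℕ) (hα0 : 0 < α) (hα2 : α < 2) (hθ : 1 / α < θ)
    (hd : 2 ≤ d)
    (f g ginv s₁ : ℝ → ℝ)
    (hf : ∀ s : ℝ, f s = Real.log (2 + s) ^ (-θ))
    (hg : ∀ s : ℝ, g s = Real.log (2 + s) ^ (1 - θ * α))
    (hginv : ∀ t : ℝ, ginv t = sInf {s : ℝ | 0 ≤ s ∧ g s ≤ t})
    (hs₁ : ∀ t : ℝ, s₁ t = max (ginv t) 2)
    (c₁ c₂ c₃ : ℝ) (hc₁ : 0 < c₁) (hc₂ : 0 < c₂) (hc₃ : 0 < c₃) :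
    ∃ c₆ c₇ : ℝ, 0 < c₆ ∧ 0 < c₇ ∧ ∀ t : ℝ, 0 < t → t ≤ 1 →
      c₆ * Real.exp (c₇ * t ^ (-1 / (θ * α - 1))) ≤
        ∫ s in (0:ℝ)..(c₁ * s₁ (c₂ * t)),
          Real.log (2 + s) ^ (-(θ * ((d : ℝ) - 1))) *
            Real.exp (-(c₃ * t * Real.log (2 + s) ^ (θ * α))) := by
  have hθ0 : 0 < θ := lt_trans (by positivity) hθ
  have hE1 : 1 < θ * α := by rwa [div_lt_iff₀ hα0] at hθ
  have hE0 : 0 < θ * α - 1 := by linarith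
  have hEnn : (0:ℝ) ≤ θ * α := by linarith
  set β : ℝ := 1 / (θ * α - 1) with hβdef
  have hβ : 0 < β := by positivity
  set p : ℝ := θ * ((d : ℝ) - 1) with hpdef
  have hd2 : (2:ℝ) ≤ (d:ℝ) := by exact_mod_cast hd
  have hp : 0 < p := mul_pos hθ0 (by linarith)
  have h2E : (0:ℝ) < 2 ^ (θ * α) := Real.rpow_pos_of_pos (by norm_num) _
  set c : ℝ := min (c₂ ^ (-β)) (((2 * c₃ * 2 ^ (θ * α))⁻¹) ^ β) with hcdef
  have hc0 : 0 < c :=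
    lt_min (Real.rpow_pos_of_pos hc₂ _)
      (Real.rpow_pos_of_pos (inv_pos.mpr (by positivity)) _)
  have hl3 : (0:ℝ) < Real.log 3 := Real.log_pos (by norm_num)
  -- key smallness of c
  have hc2c : c₃ * (2 * c) ^ (θ * α) ≤ c / 2 := by
    have h1 : c ≤ ((2 * c₃ * 2 ^ (θ * α))⁻¹) ^ β := min_le_right _ _
    have h2 : c ^ (θ * α - 1) ≤ (2 * c₃ * 2 ^ (θ * α))⁻¹ := by
      calc c ^ (θ * α - 1)
          ≤ (((2 * c₃ * 2 ^ (θ * α))⁻¹) ^ β) ^ (θ * α - 1) :=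
            Real.rpow_le_rpow hc0.le h1 hE0.le
        _ = ((2 * c₃ * 2 ^ (θ * α))⁻¹) ^ (β * (θ * α - 1)) :=
            (Real.rpow_mul (by positivity) _ _).symm
        _ = (2 * c₃ * 2 ^ (θ * α))⁻¹ := by
            rw [show β * (θ * α - 1) = 1 from by
              rw [hβdef]; exact one_div_mul_cancel hE0.ne', Real.rpow_one]
    have h3 : (2 * c) ^ (θ * α) = 2 ^ (θ * α) * (c ^ (θ * α - 1) * c) := by
      rw [Real.mul_rpow (by norm_num) hc0.le]
      congr 1
      rw [← Real.rpow_add_one hc0.ne' (θ * α - 1), sub_add_cancel]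
    rw [h3]
    have hkey : c₃ * 2 ^ (θ * α) * (2 * c₃ * 2 ^ (θ * α))⁻¹ = 1 / 2 := by
      field_simp
    have h4 : c₃ * 2 ^ (θ * α) * c ^ (θ * α - 1) ≤ 1 / 2 := by
      calc c₃ * 2 ^ (θ * α) * c ^ (θ * α - 1)
          ≤ c₃ * 2 ^ (θ * α) * (2 * c₃ * 2 ^ (θ * α))⁻¹ := by
            apply mul_le_mul_of_nonneg_left h2 (by positivity)
        _ = 1 / 2 := hkey
    nlinarith [hc0.le]
  set m : ℝ := min 1 (c₁ / 2) with hmdef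
  have hm : 0 < m := lt_min one_pos (by positivity)
  set D : ℝ := Real.log 3 + c with hDdef
  have hD : 0 < D := by positivity
  set K₁ : ℝ := c₃ * (2 * Real.log 3) ^ (θ * α) with hK₁def
  set lam : ℝ := c / (4 * p) with hlamdef
  have hlam : 0 < lam := by positivity
  set B : ℝ := -(p * Real.log lam) with hBdef
  refine ⟨m * D ^ (-p) * Real.exp (-(K₁ + B)), c / 4, by positivity, by positivity, ?_⟩
  intro t ht ht1
  set Y : ℝ := t ^ (-β) with hYdef
  have hYeq : t ^ (-1 / (θ * α - 1)) = Y := by rw [hYdef, hβdef, neg_div]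
  have hY0 : 0 < Y := Real.rpow_pos_of_pos ht _
  have hY1 : 1 ≤ Y :=
    Real.one_le_rpow_of_pos_of_le_one_of_nonpos ht ht1 (by linarith)
  -- key rpow identity
  have hkeyY : t * Y ^ (θ * α) = Y := by
    have hβmul : β * (θ * α - 1) = 1 := by
      rw [hβdef]; exact one_div_mul_cancel hE0.ne'
    have e1 : (1:ℝ) + -β * (θ * α) = -β := by linear_combination -hβmul
    calc t * Y ^ (θ * α) = t ^ (1:ℝ) * t ^ (-β * (θ * α)) := by
          rw [Real.rpow_one, hYdef, ← Real.rpow_mul ht.le]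
      _ = t ^ ((1:ℝ) + -β * (θ * α)) := (Real.rpow_add ht _ _).symm
      _ = Y := by rw [e1]
  -- lower bound on L
  set u : ℝ := c₂ * t with hudef
  have hu : 0 < u := by positivity
  set X : ℝ := u ^ (-β) with hXdef
  have hX0 : 0 < X := Real.rpow_pos_of_pos hu _
  have hXY : X = c₂ ^ (-β) * Y := by
    rw [hXdef, hYdef, hudef, Real.mul_rpow hc₂.le ht.le]
  have hmem : Real.exp X ∈ {s : ℝ | 0 ≤ s ∧ g s ≤ u} := by
    refine ⟨(Real.exp_pos X).le, ?_⟩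
    rw [hg]
    have hlog : X ≤ Real.log (2 + Real.exp X) := by
      calc X = Real.log (Real.exp X) := (Real.log_exp X).symm
        _ ≤ Real.log (2 + Real.exp X) :=
            Real.log_le_log (Real.exp_pos X) (by linarith)
    calc Real.log (2 + Real.exp X) ^ (1 - θ * α)
        ≤ X ^ (1 - θ * α) :=
          Real.rpow_le_rpow_of_nonpos hX0 hlog (by linarith)
      _ = u := by
          rw [hXdef, ← Real.rpow_mul hu.le]
          rw [show -β * (1 - θ * α) = 1 from by
            rw [hβdef]; field_simp; ring, Real.rpow_one]
  have hlb : ∀ s ∈ {s : ℝ | 0 ≤ s ∧ g s ≤ u}, Real.exp X - 2 ≤ s := by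
    rintro s ⟨hs0, hgs⟩
    rw [hg] at hgs
    have ha0 : 0 < Real.log (2 + s) := Real.log_pos (by linarith)
    have hXa : X ≤ Real.log (2 + s) := by
      calc X = u ^ (-β) := hXdef
        _ ≤ (Real.log (2 + s) ^ (1 - θ * α)) ^ (-β) :=
            Real.rpow_le_rpow_of_nonpos (Real.rpow_pos_of_pos ha0 _) hgs
              (by linarith)
        _ = Real.log (2 + s) := by
            rw [← Real.rpow_mul ha0.le]
            rw [show (1 - θ * α) * -β = 1 from by
              rw [hβdef]; field_simp; ring, Real.rpow_one]
    have := Real.exp_le_exp.mpr hXa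
    rw [Real.exp_log (by linarith : (0:ℝ) < 2 + s)] at this
    linarith
  have hginv_lb : Real.exp X - 2 ≤ ginv u := by
    rw [hginv]; exact le_csInf ⟨_, hmem⟩ hlb
  have hs₁lb : Real.exp X / 2 ≤ s₁ u := by
    rw [hs₁]
    rcases le_or_gt (Real.exp X) 4 with h | h
    · exact le_trans (by linarith) (le_max_right _ _)
    · exact le_trans (by linarith) (le_max_left _ _)
  set L : ℝ := c₁ * s₁ u with hLdef
  have hL : c₁ / 2 * Real.exp X ≤ L := by
    rw [hLdef]
    calc c₁ / 2 * Real.exp X = c₁ * (Real.exp X / 2) := by ring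
      _ ≤ c₁ * s₁ u := mul_le_mul_of_nonneg_left hs₁lb hc₁.le
  set M : ℝ := min (Real.exp (c * Y)) L with hMdef
  have hcY : c * Y ≤ X := by
    rw [hXY]
    exact mul_le_mul_of_nonneg_right (min_le_left _ _) hY0.le
  have hM_lb : m * Real.exp (c * Y) ≤ M := by
    refine le_min ?_ ?_
    · have h := mul_le_mul_of_nonneg_right (min_le_left 1 (c₁ / 2))
        (Real.exp_pos (c * Y)).le
      simpa using h
    · have h := mul_le_mul (min_le_right 1 (c₁ / 2)) (Real.exp_le_exp.mpr hcY)
        (Real.exp_pos _).le (by positivity : (0:ℝ) ≤ c₁ / 2)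
      exact le_trans h hL
  have hM0 : 0 < M := lt_of_lt_of_le (by positivity) hM_lb
  have hML : M ≤ L := min_le_right _ _
  have hL0 : 0 < L := lt_of_lt_of_le hM0 hML
  -- the integrand
  set F : ℝ → ℝ := fun s =>
    Real.log (2 + s) ^ (-p) * Real.exp (-(c₃ * t * Real.log (2 + s) ^ (θ * α)))
    with hFdef
  have hlogc : ContinuousOn (fun s : ℝ => Real.log (2 + s)) (Set.Ici 0) :=
    ContinuousOn.log ((continuous_const.add continuous_id).continuousOn)
      (fun x hx => by
        simp only [Set.mem_Ici] at hx
        exact ne_of_gt (by linarith))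
  have hne : ∀ x ∈ Set.Ici (0:ℝ), Real.log (2 + x) ≠ 0 := fun x hx =>
    ne_of_gt (Real.log_pos (by simp only [Set.mem_Ici] at hx; linarith))
  have hcont : ContinuousOn F (Set.Ici 0) := by
    apply ContinuousOn.mul
    · exact hlogc.rpow_const (fun x hx => Or.inl (hne x hx))
    · exact Real.continuous_exp.comp_continuousOn
        ((continuousOn_const.mul
          (hlogc.rpow_const (fun x hx => Or.inl (hne x hx)))).neg)
  have hIntF : ∀ a b : ℝ, 0 ≤ a → 0 ≤ b → IntervalIntegrable F volume a b := by
    intro a b ha hb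
    apply (hcont.mono ?_).intervalIntegrable
    intro x hx
    exact le_trans (le_min ha hb) hx.1
  have hFnn : ∀ x : ℝ, 0 ≤ x → 0 ≤ F x := by
    intro x hx
    exact mul_nonneg (Real.rpow_nonneg (Real.log_nonneg (by linarith)) _)
      (Real.exp_pos _).le
  -- constant lower bound on [0, M]
  set κ : ℝ := (D * Y) ^ (-p) *
    Real.exp (-(K₁ + c₃ * (2 * c) ^ (θ * α) * Y)) with hκdef
  have hκ0 : 0 ≤ κ := mul_nonneg (Real.rpow_nonneg (by positivity) _)
    (Real.exp_pos _).le
  have hpoint : ∀ s ∈ Set.Icc (0:ℝ) M, κ ≤ F s := by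
    rintro s ⟨hs0, hsM⟩
    have ha0 : 0 < Real.log (2 + s) := Real.log_pos (by linarith)
    have haup : Real.log (2 + s) ≤ Real.log 3 + c * Y := by
      have he1 : 1 ≤ Real.exp (c * Y) := Real.one_le_exp (by positivity)
      have h1 : (2:ℝ) + s ≤ 3 * Real.exp (c * Y) := by
        have hsle : s ≤ Real.exp (c * Y) := le_trans hsM (min_le_left _ _)
        linarith
      calc Real.log (2 + s) ≤ Real.log (3 * Real.exp (c * Y)) :=
          Real.log_le_log (by linarith) h1
        _ = Real.log 3 + c * Y := by
            rw [Real.log_mul (by norm_num) (Real.exp_pos _).ne', Real.log_exp]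
    have h1 : (D * Y) ^ (-p) ≤ Real.log (2 + s) ^ (-p) := by
      apply Real.rpow_le_rpow_of_nonpos ha0 ?_ (by linarith)
      have h3Y : Real.log 3 ≤ Real.log 3 * Y := le_mul_of_one_le_right hl3.le hY1
      calc Real.log (2 + s) ≤ Real.log 3 + c * Y := haup
        _ ≤ Real.log 3 * Y + c * Y := by linarith
        _ = D * Y := by rw [hDdef]; ring
    have h2 : c₃ * t * Real.log (2 + s) ^ (θ * α) ≤
        K₁ + c₃ * (2 * c) ^ (θ * α) * Y := by
      have hcase : Real.log (2 + s) ^ (θ * α) ≤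
          (2 * Real.log 3) ^ (θ * α) + (2 * (c * Y)) ^ (θ * α) := by
        rcases le_total (c * Y) (Real.log 3) with h | h
        · have hle : Real.log (2 + s) ≤ 2 * Real.log 3 := by linarith
          have := Real.rpow_le_rpow ha0.le hle hEnn
          have hnn : (0:ℝ) ≤ (2 * (c * Y)) ^ (θ * α) :=
            Real.rpow_nonneg (by positivity) _
          linarith
        · have hle : Real.log (2 + s) ≤ 2 * (c * Y) := by linarith
          have := Real.rpow_le_rpow ha0.le hle hEnn
          have hnn : (0:ℝ) ≤ (2 * Real.log 3) ^ (θ * α) :=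
            Real.rpow_nonneg (by positivity) _
          linarith
      calc c₃ * t * Real.log (2 + s) ^ (θ * α)
          ≤ c₃ * t * ((2 * Real.log 3) ^ (θ * α) + (2 * (c * Y)) ^ (θ * α)) :=
            mul_le_mul_of_nonneg_left hcase (by positivity)
        _ = c₃ * t * (2 * Real.log 3) ^ (θ * α) +
            c₃ * (2 * c) ^ (θ * α) * (t * Y ^ (θ * α)) := by
            rw [show (2 * (c * Y)) = (2 * c) * Y by ring,
              Real.mul_rpow (by positivity) hY0.le]
            ring
        _ ≤ K₁ + c₃ * (2 * c) ^ (θ * α) * Y := by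
            have hnn : (0:ℝ) ≤ (2 * Real.log 3) ^ (θ * α) :=
              Real.rpow_nonneg (by positivity) _
            have h5 : c₃ * t * (2 * Real.log 3) ^ (θ * α) ≤ K₁ := by
              rw [hK₁def]
              exact mul_le_mul_of_nonneg_right
                (mul_le_of_le_one_right hc₃.le ht1) hnn
            rw [hkeyY]
            linarith
    calc κ = (D * Y) ^ (-p) *
        Real.exp (-(K₁ + c₃ * (2 * c) ^ (θ * α) * Y)) := hκdef
      _ ≤ Real.log (2 + s) ^ (-p) *
          Real.exp (-(c₃ * t * Real.log (2 + s) ^ (θ * α))) := by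
          apply mul_le_mul h1 (Real.exp_le_exp.mpr (neg_le_neg h2))
            (Real.exp_pos _).le (Real.rpow_nonneg ha0.le _)
      _ = F s := rfl
  have hmid : M * κ ≤ ∫ s in (0:ℝ)..M, F s := by
    have h := intervalIntegral.integral_mono_on (μ := volume) hM0.le
      intervalIntegrable_const (hIntF 0 M le_rfl hM0.le) hpoint
    rw [intervalIntegral.integral_const, sub_zero, smul_eq_mul] at h
    exact h
  have hsplit : ∫ s in (0:ℝ)..L, F s =
      (∫ s in (0:ℝ)..M, F s) + ∫ s in M..L, F s :=
    (intervalIntegral.integral_add_adjacent_intervals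
      (hIntF 0 M le_rfl hM0.le) (hIntF M L hM0.le hL0.le)).symm
  have htail : 0 ≤ ∫ s in M..L, F s :=
    intervalIntegral.integral_nonneg hML (fun x hx => hFnn x (le_trans hM0.le hx.1))
  -- assemble the exponential estimates
  have hYp : Real.exp (-(c / 4 * Y + B)) ≤ Y ^ (-p) := by
    rw [Real.rpow_def_of_pos hY0]
    apply Real.exp_le_exp.mpr
    have hlogY : Real.log Y ≤ lam * Y - Real.log lam := by
      have h2 : Real.log (lam * Y) = Real.log lam + Real.log Y :=
        Real.log_mul hlam.ne' hY0.ne'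
      have h1 : Real.log (lam * Y) ≤ lam * Y := by
        have := Real.log_le_sub_one_of_pos (mul_pos hlam hY0)
        linarith
      linarith
    have hplam : p * lam = c / 4 := by rw [hlamdef]; field_simp
    have : p * Real.log Y ≤ c / 4 * Y + B := by
      rw [hBdef]
      calc p * Real.log Y ≤ p * (lam * Y - Real.log lam) :=
          mul_le_mul_of_nonneg_left hlogY hp.le
        _ = p * lam * Y + -(p * Real.log lam) := by ring
        _ = c / 4 * Y + -(p * Real.log lam) := by rw [hplam]
    linarith
  have hfinal : m * D ^ (-p) * Real.exp (-(K₁ + B)) * Real.exp (c / 4 * Y) ≤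
      m * Real.exp (c * Y) * κ := by
    have hDY : (D * Y) ^ (-p) = D ^ (-p) * Y ^ (-p) :=
      Real.mul_rpow hD.le hY0.le
    have hexp2 : Real.exp (-(K₁ + c / 2 * Y)) ≤
        Real.exp (-(K₁ + c₃ * (2 * c) ^ (θ * α) * Y)) := by
      apply Real.exp_le_exp.mpr
      have : c₃ * (2 * c) ^ (θ * α) * Y ≤ c / 2 * Y :=
        mul_le_mul_of_nonneg_right hc2c hY0.le
      linarith
    have hexpeq : Real.exp (c * Y) *
        (Real.exp (-(c / 4 * Y + B)) * Real.exp (-(K₁ + c / 2 * Y))) =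
        Real.exp (-(K₁ + B)) * Real.exp (c / 4 * Y) := by
      rw [← Real.exp_add, ← Real.exp_add, ← Real.exp_add]
      congr 1
      ring
    calc m * D ^ (-p) * Real.exp (-(K₁ + B)) * Real.exp (c / 4 * Y)
        = m * D ^ (-p) *
          (Real.exp (-(K₁ + B)) * Real.exp (c / 4 * Y)) := by ring
      _ = m * D ^ (-p) * (Real.exp (c * Y) *
          (Real.exp (-(c / 4 * Y + B)) * Real.exp (-(K₁ + c / 2 * Y)))) := by
          rw [hexpeq]
      _ = m * Real.exp (c * Y) * (D ^ (-p) *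
          (Real.exp (-(c / 4 * Y + B)) * Real.exp (-(K₁ + c / 2 * Y)))) := by
          ring
      _ ≤ m * Real.exp (c * Y) * (D ^ (-p) *
          (Y ^ (-p) * Real.exp (-(K₁ + c₃ * (2 * c) ^ (θ * α) * Y)))) := by
          apply mul_le_mul_of_nonneg_left ?_ (by positivity)
          apply mul_le_mul_of_nonneg_left ?_ (Real.rpow_nonneg hD.le _)
          exact mul_le_mul hYp hexp2 (Real.exp_pos _).le
            (Real.rpow_nonneg hY0.le _)
      _ = m * Real.exp (c * Y) * κ := by rw [hκdef, hDY]; ring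
  calc m * D ^ (-p) * Real.exp (-(K₁ + B)) *
      Real.exp (c / 4 * t ^ (-1 / (θ * α - 1)))
      = m * D ^ (-p) * Real.exp (-(K₁ + B)) * Real.exp (c / 4 * Y) := by
        rw [hYeq]
    _ ≤ m * Real.exp (c * Y) * κ := hfinal
    _ ≤ M * κ := mul_le_mul_of_nonneg_right hM_lb hκ0
    _ ≤ ∫ s in (0:ℝ)..M, F s := hmid
    _ ≤ ∫ s in (0:ℝ)..L, F s := by rw [hsplit]; linarith
end

section
/- Let α ∈ (0,2) and θ > 0. With f(s) := (1+s)^{−θ}, g(s) := f(s)^α·log(2+s) = (1+s)^{−θα}·log(2+s), and s₁(t) := max(inf{s ≥ 0 : g(s) ≤ t}, 2), there exist constants c₁, c₂ > 0 such that for all t ∈ (0,1]: c₁·t^{−1/(θα)}·(log(1+t^{−1}))^{1/(θα)} ≤ s₁(t) ≤ c₂·t^{−1/(θα)}·(log(1+t^{−1}))^{1/(θα)}. -/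
set_option maxHeartbeats 400000


/-- For `f s = (1+s)^(-θ)`, `g s = f s ^ α * log (2+s)` and
`s₁ t = max (inf {s ≥ 0 : g s ≤ t}) 2`, there are constants `c₁, c₂ > 0` with
`c₁ * t^(-1/(θα)) * (log (1+t⁻¹))^(1/(θα)) ≤ s₁ t ≤ c₂ * t^(-1/(θα)) * (log (1+t⁻¹))^(1/(θα))`
for all `t ∈ (0,1]`. -/
theorem stmt11 (α θ : ℝ) (hα0 : 0 < α) (hα2 : α < 2) (hθ : 0 < θ)
    (f g s₁ : ℝ → ℝ)
    (hf : ∀ s : ℝ, f s = (1 + s) ^ (-θ))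
    (hg : ∀ s : ℝ, g s = f s ^ α * Real.log (2 + s))
    (hs₁ : ∀ t : ℝ, s₁ t = max (sInf {s : ℝ | 0 ≤ s ∧ g s ≤ t}) 2) :
    ∃ c₁ c₂ : ℝ, 0 < c₁ ∧ 0 < c₂ ∧ ∀ t : ℝ, 0 < t → t ≤ 1 →
      c₁ * (t ^ (-1 / (θ * α)) * Real.log (1 + t⁻¹) ^ (1 / (θ * α))) ≤ s₁ t ∧
      s₁ t ≤ c₂ * (t ^ (-1 / (θ * α)) * Real.log (1 + t⁻¹) ^ (1 / (θ * α))) := by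
  have hβ0 : 0 < θ * α := mul_pos hθ hα0
  set β := θ * α with hβdef
  have hβne : β ≠ 0 := ne_of_gt hβ0
  clear_value β
  have hl2 : 0 < Real.log 2 := Real.log_pos one_lt_two
  have hl21 : Real.log 2 < 1 := by
    have := Real.log_lt_sub_one_of_pos two_pos (by norm_num : (2:ℝ) ≠ 1)
    linarith
  -- rewrite g
  have hg' : ∀ s : ℝ, 0 ≤ s → g s = (1 + s) ^ (-β) * Real.log (2 + s) := by
    intro s hs
    have h1 : (0:ℝ) ≤ 1 + s := by linarith
    rw [hg s, hf s, ← Real.rpow_mul h1, hβdef]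
    ring_nf
  -- constant for lower bound
  set c₀ : ℝ := -Real.log (Real.log 2) with hc₀def
  have hc₀ : 0 < c₀ := by
    have := Real.log_neg hl2 hl21
    simp only [hc₀def]; linarith
  clear_value c₀
  set μ : ℝ := min (1/2) (β * Real.log 2 / (2 * c₀)) with hμdef
  have hμ0 : 0 < μ := by
    apply lt_min (by norm_num)
    positivity
  have hμhalf : μ ≤ 1/2 := min_le_left _ _
  have hμc : 2 * (μ * c₀) ≤ β * Real.log 2 := by
    have h := min_le_right (1/2) (β * Real.log 2 / (2 * c₀))
    rw [le_div_iff₀ (by positivity)] at h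
    rw [← hμdef] at h
    nlinarith
  clear_value μ
  set ε : ℝ := min (Real.log 2) (μ / β) / 2 with hεdef
  have hε0 : 0 < ε := by positivity
  have hε1 : 2 * ε ≤ Real.log 2 := by
    have := min_le_left (Real.log 2) (μ / β); simp only [hεdef]; linarith
  have hε2 : 2 * (ε * β) ≤ μ := by
    have h := min_le_right (Real.log 2) (μ / β)
    have h' : ε * 2 ≤ μ / β := by simp only [hεdef]; linarith
    have h2 := mul_le_mul_of_nonneg_right h' hβ0.le
    rw [div_mul_cancel₀ _ hβne] at h2
    linarith
  clear_value ε
  -- constant for upper bound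
  obtain ⟨A, hA1, hAineq⟩ :
      ∃ A : ℝ, 1 ≤ A ∧ (Real.log (2 + A) + 2 / β) * (2 / Real.log 2) ≤ A ^ β := by
    set a : ℝ := (2 / Real.log 2) / β with hadef
    set b : ℝ := (Real.log 3 + 2 / β) * (2 / Real.log 2) with hbdef
    have ha0 : 0 < a := by positivity
    have hb0 : 0 < b := by
      have : 0 < Real.log 3 := Real.log_pos (by norm_num)
      positivity
    set M : ℝ := max (8 * a) (Real.sqrt (8 * b)) with hMdef
    have hM0 : 0 ≤ M := le_trans (by positivity) (le_max_left _ _)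
    have hMa : 8 * a ≤ M := le_max_left _ _
    have hMb : 8 * b ≤ M ^ 2 := by
      have h1 : Real.sqrt (8 * b) ≤ M := le_max_right _ _
      have h2 : Real.sqrt (8 * b) ^ 2 = 8 * b := Real.sq_sqrt (by positivity)
      nlinarith [Real.sqrt_nonneg (8 * b)]
    have hexpM : a * M + b ≤ Real.exp M := by
      have h1 : M / 2 + 1 ≤ Real.exp (M / 2) := Real.add_one_le_exp _
      have h2 : Real.exp (M / 2) * Real.exp (M / 2) = Real.exp M := by
        rw [← Real.exp_add]; ring_nf
      nlinarith [Real.exp_pos (M / 2)]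
    refine ⟨Real.exp (M / β), Real.one_le_exp (by positivity), ?_⟩
    have hApow : Real.exp (M / β) ^ β = Real.exp M := by
      rw [← Real.exp_log (x := Real.exp (M / β) ^ β) (by positivity)]
      rw [Real.log_rpow (Real.exp_pos _), Real.log_exp]
      congr 1
      field_simp
    rw [hApow]
    have hlog : Real.log (2 + Real.exp (M / β)) ≤ Real.log 3 + M / β := by
      have hA1' : 1 ≤ Real.exp (M / β) := Real.one_le_exp (by positivity)
      have h1 : 2 + Real.exp (M / β) ≤ 3 * Real.exp (M / β) := by nlinarith
      calc Real.log (2 + Real.exp (M / β)) ≤ Real.log (3 * Real.exp (M / β)) :=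
            Real.log_le_log (by positivity) h1
        _ = Real.log 3 + M / β := by
            rw [Real.log_mul (by norm_num) (by positivity), Real.log_exp]
    have h2 : (Real.log (2 + Real.exp (M / β)) + 2 / β) * (2 / Real.log 2)
        ≤ a * M + b := by
      have hfac : 0 < 2 / Real.log 2 := by positivity
      have : Real.log (2 + Real.exp (M / β)) + 2 / β ≤ Real.log 3 + M / β + 2 / β := by
        linarith
      calc (Real.log (2 + Real.exp (M / β)) + 2 / β) * (2 / Real.log 2)
          ≤ (Real.log 3 + M / β + 2 / β) * (2 / Real.log 2) :=
            mul_le_mul_of_nonneg_right this hfac.le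
        _ = a * M + b := by simp only [hadef, hbdef]; ring
    linarith
  have hA0 : 0 < A := lt_of_lt_of_le one_pos hA1
  have hlogA : 0 ≤ Real.log (2 + A) := Real.log_nonneg (by linarith)
  -- the constants
  have hφ₀ : 0 < Real.log 2 ^ (1 / β) := Real.rpow_pos_of_pos hl2 _
  refine ⟨ε ^ (1 / β) / 2, A + 2 / Real.log 2 ^ (1 / β),
    by positivity, by positivity, ?_⟩
  intro t ht0 ht1
  have hti : 1 ≤ t⁻¹ := (one_le_inv₀ ht0).mpr ht1
  set L : ℝ := Real.log (1 + t⁻¹) with hLdef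
  set u : ℝ := -Real.log t with hudef
  have hu0 : 0 ≤ u := by
    have := Real.log_nonpos ht0.le ht1
    simp only [hudef]; linarith
  have hL2 : Real.log 2 ≤ L := by
    apply Real.log_le_log two_pos; linarith
  have hL0 : 0 < L := lt_of_lt_of_le hl2 hL2
  have hLu : L ≤ 1 + u := by
    have h1 : L ≤ Real.log (2 * t⁻¹) := by
      apply Real.log_le_log (by linarith); linarith
    have h2 : Real.log (2 * t⁻¹) = Real.log 2 + u := by
      rw [Real.log_mul (by norm_num) (by positivity), Real.log_inv]
    rw [h2] at h1; linarith
  have hLge : u ≤ L := by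
    have : Real.log t⁻¹ ≤ L := by
      apply Real.log_le_log (by positivity); linarith
    rw [Real.log_inv] at this; linarith
  have huL : Real.log 2 * (1 + u) ≤ 2 * L := by
    have w : Real.log 2 * u ≤ 1 * u := mul_le_mul_of_nonneg_right hl21.le hu0
    have e : Real.log 2 * (1 + u) = Real.log 2 + Real.log 2 * u := by ring
    rw [e]; linarith
  set φ : ℝ := t ^ (-1 / β) * L ^ (1 / β) with hφdef
  have hφpos : 0 < φ := by positivity
  have hts : t ^ (-1 / β) = Real.exp (u / β) := by
    rw [Real.rpow_def_of_pos ht0]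
    congr 1
    simp only [hudef]; field_simp
  clear_value L u
  have hφ0 : Real.log 2 ^ (1 / β) ≤ φ := by
    have h1 : (1:ℝ) ≤ t ^ (-1 / β) :=
      Real.one_le_rpow_of_pos_of_le_one_of_nonpos ht0 ht1
        (by rw [neg_div]; exact neg_nonpos.mpr (by positivity))
    have h2 : Real.log 2 ^ (1 / β) ≤ L ^ (1 / β) :=
      Real.rpow_le_rpow hl2.le hL2 (by positivity)
    have h3 : 0 < L ^ (1 / β) := Real.rpow_pos_of_pos hL0 _
    calc Real.log 2 ^ (1 / β) ≤ L ^ (1 / β) := h2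
      _ = 1 * L ^ (1 / β) := by ring
      _ ≤ t ^ (-1 / β) * L ^ (1 / β) := mul_le_mul_of_nonneg_right h1 h3.le
  -- the key iff for membership
  have keyiff : ∀ s : ℝ, 0 ≤ s →
      (g s ≤ t ↔ Real.log (2 + s) ≤ t * (1 + s) ^ β) := by
    intro s hs
    have hx : (0:ℝ) < 1 + s := by linarith
    have hxb : 0 < (1 + s) ^ β := Real.rpow_pos_of_pos hx β
    rw [hg' s hs, Real.rpow_neg hx.le, inv_mul_le_iff₀ hxb]
    rw [mul_comm]
  -- membership of A * φ
  have hmem : A * φ ∈ {s : ℝ | 0 ≤ s ∧ g s ≤ t} := by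
    have hs0 : 0 ≤ A * φ := by positivity
    refine ⟨hs0, (keyiff _ hs0).mpr ?_⟩
    have hφβ : φ ^ β = t⁻¹ * L := by
      rw [hφdef, Real.mul_rpow (by positivity) (by positivity),
        ← Real.rpow_mul ht0.le, ← Real.rpow_mul hL0.le,
        show -1 / β * β = -1 by field_simp,
        show 1 / β * β = 1 by field_simp,
        Real.rpow_neg_one, Real.rpow_one]
    have step1 : t * (A * φ) ^ β = A ^ β * L := by
      rw [Real.mul_rpow hA0.le hφpos.le, hφβ]
      field_simp
    have step2 : t * (A * φ) ^ β ≤ t * (1 + A * φ) ^ β := by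
      exact mul_le_mul_of_nonneg_left
        (Real.rpow_le_rpow hs0 (by linarith : A * φ ≤ 1 + A * φ) hβ0.le) ht0.le
    have hLe : L ^ (1 / β) ≤ Real.exp ((1 + u) / β) := by
      have h1 : L ≤ Real.exp (1 + u) := by
        have := Real.add_one_le_exp (1 + u)
        linarith
      have h2 : L ^ (1 / β) ≤ Real.exp (1 + u) ^ (1 / β) :=
        Real.rpow_le_rpow hL0.le h1 (by positivity)
      have h3 : Real.exp (1 + u) ^ (1 / β) = Real.exp ((1 + u) / β) := by
        rw [Real.rpow_def_of_pos (Real.exp_pos _), Real.log_exp]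
        ring_nf
      rw [h3] at h2; exact h2
    have hsle : A * φ ≤ A * Real.exp (2 * (1 + u) / β) := by
      have h1 : φ ≤ Real.exp (u / β) * Real.exp ((1 + u) / β) := by
        rw [hφdef, hts]
        exact mul_le_mul_of_nonneg_left hLe (Real.exp_pos _).le
      have h2 : Real.exp (u / β) * Real.exp ((1 + u) / β)
          ≤ Real.exp (2 * (1 + u) / β) := by
        rw [← Real.exp_add]
        apply Real.exp_le_exp.mpr
        rw [← add_div]
        rw [div_le_div_iff₀ hβ0 hβ0]
        exact mul_le_mul_of_nonneg_right (by linarith) hβ0.le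
      exact mul_le_mul_of_nonneg_left (h1.trans h2) hA0.le
    have step3 : Real.log (2 + A * φ) ≤ Real.log (2 + A) + 2 * (1 + u) / β := by
      have hex : 1 ≤ Real.exp (2 * (1 + u) / β) := Real.one_le_exp (by positivity)
      have h1 : 2 + A * φ ≤ (2 + A) * Real.exp (2 * (1 + u) / β) := by
        have e : (2 + A) * Real.exp (2 * (1 + u) / β)
            = 2 * Real.exp (2 * (1 + u) / β) + A * Real.exp (2 * (1 + u) / β) := by
          ring
        rw [e]; linarith only [hsle, hex]
      calc Real.log (2 + A * φ) ≤ Real.log ((2 + A) * Real.exp (2 * (1 + u) / β)) :=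
            Real.log_le_log (by positivity) h1
        _ = Real.log (2 + A) + 2 * (1 + u) / β := by
            rw [Real.log_mul (by positivity) (by positivity), Real.log_exp]
    have step4 : Real.log (2 + A) + 2 * (1 + u) / β
        ≤ (Real.log (2 + A) + 2 / β) * (1 + u) := by
      have e1 : 2 * (1 + u) / β = 2 / β * (1 + u) := by ring
      have h := mul_nonneg hlogA hu0
      have e2 : (Real.log (2 + A) + 2 / β) * (1 + u)
          = Real.log (2 + A) + 2 / β * (1 + u) + Real.log (2 + A) * u := by ring
      rw [e1, e2]; linarith
    have step5 : (Real.log (2 + A) + 2 / β) * (1 + u) ≤ A ^ β * L := by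
      have hfac : 0 ≤ Real.log (2 + A) + 2 / β := by positivity
      have h1 : (Real.log (2 + A) + 2 / β) * (1 + u)
          ≤ (Real.log (2 + A) + 2 / β) * (2 / Real.log 2 * L) := by
        apply mul_le_mul_of_nonneg_left _ hfac
        rw [div_mul_eq_mul_div, le_div_iff₀ hl2]
        nlinarith
      have h2 : (Real.log (2 + A) + 2 / β) * (2 / Real.log 2 * L)
          = (Real.log (2 + A) + 2 / β) * (2 / Real.log 2) * L := by ring
      have h3 : (Real.log (2 + A) + 2 / β) * (2 / Real.log 2) * L ≤ A ^ β * L :=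
        mul_le_mul_of_nonneg_right hAineq hL0.le
      linarith
    calc Real.log (2 + A * φ) ≤ (Real.log (2 + A) + 2 / β) * (1 + u) := by
          linarith
      _ ≤ A ^ β * L := step5
      _ = t * (A * φ) ^ β := step1.symm
      _ ≤ t * (1 + A * φ) ^ β := step2
  have hSne : Set.Nonempty {s : ℝ | 0 ≤ s ∧ g s ≤ t} := ⟨A * φ, hmem⟩
  have hSbdd : BddBelow {s : ℝ | 0 ≤ s ∧ g s ≤ t} := ⟨0, fun x hx => hx.1⟩
  -- lower bound for all elements
  have hlb : ∀ s ∈ {s : ℝ | 0 ≤ s ∧ g s ≤ t}, ε ^ (1 / β) * φ - 1 ≤ s := by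
    rintro s ⟨hs0, hgs⟩
    have hx : (0:ℝ) < 1 + s := by linarith
    have hxb : 0 < (1 + s) ^ β := Real.rpow_pos_of_pos hx β
    have hgs' : Real.log (2 + s) ≤ t * (1 + s) ^ β := (keyiff s hs0).mp hgs
    have h1 : Real.log 2 ≤ Real.log (2 + s) := Real.log_le_log two_pos (by linarith)
    have h2 : Real.log 2 ≤ t * (1 + s) ^ β := h1.trans hgs'
    have h3 : Real.log (Real.log 2) ≤ Real.log t + β * Real.log (1 + s) := by
      have := Real.log_le_log hl2 h2
      rwa [Real.log_mul ht0.ne' hxb.ne', Real.log_rpow hx] at this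
    have h4 : Real.log (1 + s) ≤ Real.log (2 + s) :=
      Real.log_le_log hx (by linarith)
    set x : ℝ := Real.log (2 + s) with hxdef
    have hlow2 : u - c₀ ≤ β * x := by
      have h5 : u - c₀ ≤ β * Real.log (1 + s) := by
        rw [hudef, hc₀def]; linarith
      have h6 := mul_le_mul_of_nonneg_left h4 hβ0.le
      rw [hxdef]; linarith
    -- x ≥ μ u / β, i.e. μ u ≤ β x
    have hx2 : Real.log 2 ≤ x := h1
    have g1 : μ * u ≤ β * x := by
      have p1 : μ * (u - c₀) ≤ μ * (β * x) := mul_le_mul_of_nonneg_left hlow2 hμ0.le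
      rw [show μ * (u - c₀) = μ * u - μ * c₀ by ring,
        show μ * (β * x) = μ * (β * x) by ring] at p1
      have w6 : β * Real.log 2 ≤ β * x := mul_le_mul_of_nonneg_left hx2 hβ0.le
      have p2 : (1 / 2) * (β * Real.log 2) ≤ (1 - μ) * (β * Real.log 2) :=
        mul_le_mul_of_nonneg_right (by linarith) (by positivity)
      have p3 : (1 - μ) * (β * Real.log 2) ≤ (1 - μ) * (β * x) :=
        mul_le_mul_of_nonneg_left w6 (by linarith)
      rw [show (1 - μ) * (β * x) = β * x - μ * (β * x) by ring] at p3
      linarith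
    have hcomb : ε * L ≤ x := by
      have w1 : ε * L ≤ ε * (1 + u) := mul_le_mul_of_nonneg_left hLu hε0.le
      have w3 : β * (ε * L) ≤ β * (ε * (1 + u)) := mul_le_mul_of_nonneg_left w1 hβ0.le
      rw [show β * (ε * (1 + u)) = β * ε + β * ε * u by ring] at w3
      have w4 : 2 * (ε * β) * u ≤ μ * u := mul_le_mul_of_nonneg_right hε2 hu0
      rw [show 2 * (ε * β) * u = 2 * (β * ε * u) by ring] at w4
      have w5 : β * (2 * ε) ≤ β * Real.log 2 := mul_le_mul_of_nonneg_left hε1 hβ0.le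
      rw [show β * (2 * ε) = 2 * (β * ε) by ring] at w5
      have w6 : β * Real.log 2 ≤ β * x := mul_le_mul_of_nonneg_left hx2 hβ0.le
      have w7 : β * (ε * L) ≤ β * x := by linarith
      exact le_of_mul_le_mul_left w7 hβ0
    have hpow : ε * L * t⁻¹ ≤ (1 + s) ^ β := by
      have h5 : ε * L ≤ t * (1 + s) ^ β := hcomb.trans hgs'
      have h6 := mul_le_mul_of_nonneg_right h5 (inv_nonneg.mpr ht0.le)
      calc ε * L * t⁻¹ ≤ t * (1 + s) ^ β * t⁻¹ := h6
        _ = (1 + s) ^ β := by field_simp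
    have h5 : (ε * L * t⁻¹) ^ (1 / β) ≤ ((1 + s) ^ β) ^ (1 / β) :=
      Real.rpow_le_rpow (by positivity) hpow (by positivity)
    have h6 : ((1 + s) ^ β) ^ (1 / β) = 1 + s := by
      rw [← Real.rpow_mul hx.le, show β * (1 / β) = 1 by field_simp, Real.rpow_one]
    have h7 : (ε * L * t⁻¹) ^ (1 / β) = ε ^ (1 / β) * φ := by
      rw [show ε * L * t⁻¹ = ε * (t⁻¹ * L) by ring,
        Real.mul_rpow hε0.le (by positivity),
        Real.mul_rpow (by positivity) hL0.le,
        Real.inv_rpow ht0.le, ← Real.rpow_neg ht0.le, hφdef, neg_div]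
    rw [h7, h6] at h5
    linarith
  have hInf_ge : ε ^ (1 / β) * φ - 1 ≤ sInf {s : ℝ | 0 ≤ s ∧ g s ≤ t} :=
    le_csInf hSne hlb
  have hInf_le : sInf {s : ℝ | 0 ≤ s ∧ g s ≤ t} ≤ A * φ := csInf_le hSbdd hmem
  rw [hs₁ t]
  have m1 := le_max_left (sInf {s : ℝ | 0 ≤ s ∧ g s ≤ t}) 2
  have m2 := le_max_right (sInf {s : ℝ | 0 ≤ s ∧ g s ≤ t}) 2
  constructor
  · linarith only [m1, m2, hInf_ge]
  · apply max_le
    · have h0 : (0:ℝ) ≤ 2 / Real.log 2 ^ (1 / β) * φ := by positivity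
      have e : (A + 2 / Real.log 2 ^ (1 / β)) * φ
          = A * φ + 2 / Real.log 2 ^ (1 / β) * φ := by ring
      rw [e]; linarith only [hInf_le, h0]
    · have hd : 2 / Real.log 2 ^ (1 / β) * Real.log 2 ^ (1 / β) = 2 :=
        div_mul_cancel₀ 2 hφ₀.ne'
      have h1 : 2 / Real.log 2 ^ (1 / β) * Real.log 2 ^ (1 / β)
          ≤ 2 / Real.log 2 ^ (1 / β) * φ :=
        mul_le_mul_of_nonneg_left hφ0 (by positivity)
      have h2 : (0:ℝ) ≤ A * φ := mul_nonneg hA0.le hφpos.le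
      have e : (A + 2 / Real.log 2 ^ (1 / β)) * φ
          = A * φ + 2 / Real.log 2 ^ (1 / β) * φ := by ring
      rw [e]; linarith only [hd, h1, h2]
end

section
/- Let α ∈ (0,2), θ > 0 and let d ≥ 2 be an integer. With f(s) := (1+s)^{−θ}, s₀(t) := max(inf{s > 0 : f(s)^α ≤ t}, 2), s₁(t) := max(inf{s ≥ 0 : f(s)^α·log(2+s) ≤ t}, 2), and F(t) := t^{−(1−θ(d−1))/(θα)} if θ(d−1) < 1, F(t) := 1 if θ(d−1) > 1, F(t) := log(1+t^{−1}) if θ(d−1) = 1, the following holds: for all c₁, c₂, c₃ > 0 there exists c₄ > 0 such that for all t ∈ (0,1], ∫_{c₁·s₀(t)}^{c₂·s₁(t)} (1+s)^{−θ(d−1)}·exp(−c₃·t·(1+s)^{θα}) ds ≤ c₄·F(t), where the integral is taken to be 0 when c₂·s₁(t) ≤ c₁·s₀(t). -/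
open MeasureTheory

set_option maxHeartbeats 1000000

lemma aux_exp_neg_le (n : ℕ) {x : ℝ} (hx : 0 < x) :
    Real.exp (-x) ≤ (n.factorial : ℝ) * x ^ (-(n : ℝ)) := by
  have h0 : (0:ℝ) < x ^ n / n.factorial := by positivity
  have h1 : x ^ n / n.factorial ≤ Real.exp x := by
    calc x ^ n / n.factorial
        ≤ ∑ i ∈ Finset.range (n+1), x ^ i / i.factorial :=
          Finset.single_le_sum (f := fun i => x ^ i / (i.factorial : ℝ))
            (fun i _ => by positivity) (Finset.self_mem_range_succ n)
      _ ≤ Real.exp x := Real.sum_le_exp_of_nonneg hx.le _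
  calc Real.exp (-x) = (Real.exp x)⁻¹ := Real.exp_neg x
    _ ≤ (x ^ n / n.factorial)⁻¹ := inv_anti₀ h0 h1
    _ = (n.factorial : ℝ) * x ^ (-(n : ℝ)) := by
        rw [Real.rpow_neg hx.le, Real.rpow_natCast]
        field_simp

lemma aux_int (r a b : ℝ) (hr : 1 < r) (ha : 0 < a) :
    (∫ s in Set.Ioc a b, s ^ (-r)) ≤ a ^ (1 - r) / (r - 1) := by
  have hr' : -r < -1 := by linarith
  have hInt : IntegrableOn (fun s : ℝ => s ^ (-r)) (Set.Ioi a) :=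
    integrableOn_Ioi_rpow_of_lt hr' ha
  have h1 : (∫ s in Set.Ioc a b, s ^ (-r)) ≤ ∫ s in Set.Ioi a, s ^ (-r) := by
    refine setIntegral_mono_set hInt ?_ (HasSubset.Subset.eventuallyLE Set.Ioc_subset_Ioi_self)
    filter_upwards [ae_restrict_mem measurableSet_Ioi] with s hs
    have : (0:ℝ) < s := ha.trans hs
    positivity
  have h2 : (∫ s in Set.Ioi a, s ^ (-r)) = a ^ (1 - r) / (r - 1) := by
    rw [integral_Ioi_rpow_of_lt hr' ha, show -r + 1 = 1 - r from by ring,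
      show (1 - r : ℝ) = -(r - 1) from by ring, div_neg, neg_div, neg_neg]
  linarith [h1, h2.le]

/-- For `f s = (1+s)^(-θ)` (so `f s ^(-α) = (1+s)^(θα)`),
`s₀ t = max (inf {s > 0 : f s ^ α ≤ t}) 2`,
`s₁ t = max (inf {s ≥ 0 : f s ^ α * log (2+s) ≤ t}) 2`, and the profile `F` of
Example 6.1, for all `c₁, c₂, c₃ > 0` there is `c₄ > 0` such that for all `t ∈ (0,1]`,
`∫_{c₁ s₀ t}^{c₂ s₁ t} (1+s)^(-θ(d-1)) * exp (-c₃ t (1+s)^(θα)) ds ≤ c₄ * F t`,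
the integral (over the interval `Ioc (c₁ s₀ t) (c₂ s₁ t)`) being `0` when
`c₂ s₁ t ≤ c₁ s₀ t`. -/
theorem stmt13 (α θ : ℝ) (d : ℕ) (hα0 : 0 < α) (hα2 : α < 2) (hθ : 0 < θ)
    (hd : 2 ≤ d)
    (f s₀ s₁ F : ℝ → ℝ)
    (hf : ∀ s : ℝ, f s = (1 + s) ^ (-θ))
    (hs₀ : ∀ t : ℝ, s₀ t = max (sInf {s : ℝ | 0 < s ∧ f s ^ α ≤ t}) 2)
    (hs₁ : ∀ t : ℝ, s₁ t =
      max (sInf {s : ℝ | 0 ≤ s ∧ f s ^ α * Real.log (2 + s) ≤ t}) 2)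
    (hF : ∀ t : ℝ, F t =
      if θ * ((d : ℝ) - 1) < 1 then t ^ (-(1 - θ * ((d : ℝ) - 1)) / (θ * α))
      else if 1 < θ * ((d : ℝ) - 1) then 1
      else Real.log (1 + t⁻¹))
    (c₁ c₂ c₃ : ℝ) (hc₁ : 0 < c₁) (hc₂ : 0 < c₂) (hc₃ : 0 < c₃) :
    ∃ c₄ : ℝ, 0 < c₄ ∧ ∀ t : ℝ, 0 < t → t ≤ 1 →
      (∫ s in Set.Ioc (c₁ * s₀ t) (c₂ * s₁ t),
          (1 + s) ^ (-(θ * ((d : ℝ) - 1))) *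
            Real.exp (-(c₃ * t * (1 + s) ^ (θ * α)))) ≤ c₄ * F t := by
  have hd1 : (1:ℝ) ≤ (d:ℝ) - 1 := by
    have h2d : (2:ℝ) ≤ (d:ℝ) := by exact_mod_cast hd
    linarith
  set p : ℝ := θ * ((d:ℝ) - 1) with hp_def
  set q : ℝ := θ * α with hq_def
  have hp : 0 < p := by nlinarith
  have hq : 0 < q := mul_pos hθ hα0
  set n : ℕ := ⌈1/q⌉₊ with hn_def
  have hqn : 1 ≤ q * n := by
    have h1 : 1/q ≤ (n:ℝ) := Nat.le_ceil _
    calc (1:ℝ) = q * (1/q) := by field_simp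
      _ ≤ q * n := by nlinarith
  set r : ℝ := p + q * n with hr_def
  have hr : 1 < r := by rw [hr_def]; linarith
  have hr' : -r < -1 := by linarith
  set m : ℝ := 2 * c₁ / 3 with hm_def
  have hm : 0 < m := by rw [hm_def]; positivity
  set C' : ℝ := (n.factorial : ℝ) * c₃ ^ (-(n:ℝ)) * m ^ (1 - r) / (r - 1) with hC'_def
  have hC' : 0 < C' := by
    rw [hC'_def]
    have h2 : (0:ℝ) < c₃ ^ (-(n:ℝ)) := Real.rpow_pos_of_pos hc₃ _
    have h3 : (0:ℝ) < m ^ (1-r) := Real.rpow_pos_of_pos hm _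
    have h4 : (0:ℝ) < r - 1 := by linarith
    positivity
  have hlog2 : 0 < Real.log 2 := Real.log_pos (by norm_num)
  refine ⟨C' * (1 + 1/Real.log 2), by positivity, ?_⟩
  intro t ht ht1
  set T : ℝ := t ^ (-(1/q)) with hT_def
  have hT0 : 0 < T := Real.rpow_pos_of_pos ht _
  have hT1 : 1 ≤ T := by
    have h := Real.rpow_le_rpow_of_exponent_ge ht ht1
      (neg_nonpos.mpr (by positivity : (0:ℝ) ≤ 1/q))
    rw [Real.rpow_zero] at h
    rw [hT_def]; exact h
  have hfS : ∀ s : ℝ, 0 ≤ s → f s ^ α = (1 + s) ^ (-q) := by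
    intro s hs
    rw [hf s, ← Real.rpow_mul (by linarith : (0:ℝ) ≤ 1 + s)]
    congr 1
    rw [hq_def]; ring
  have hs₀low : max (T - 1) 2 ≤ s₀ t := by
    rw [hs₀ t]
    refine max_le_max ?_ le_rfl
    apply le_csInf
    · refine ⟨T, hT0, ?_⟩
      rw [hfS T hT0.le]
      calc (1+T) ^ (-q) ≤ T ^ (-q) :=
          Real.rpow_le_rpow_of_nonpos hT0 (by linarith) (by linarith)
        _ = t := by
            rw [hT_def, ← Real.rpow_mul ht.le,
              show -(1/q) * -q = 1 from by field_simp, Real.rpow_one]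
    · rintro s ⟨hs0, hsle⟩
      rw [hfS s hs0.le] at hsle
      have h1s : (0:ℝ) < 1 + s := by linarith
      have hpos : (0:ℝ) < (1+s) ^ (-q) := Real.rpow_pos_of_pos h1s _
      have h := Real.rpow_le_rpow_of_nonpos hpos hsle
        (show -(1/q) ≤ (0:ℝ) from neg_nonpos.mpr (by positivity))
      rw [← Real.rpow_mul h1s.le, show -q * -(1/q) = 1 from by field_simp,
        Real.rpow_one] at h
      have : T ≤ 1 + s := h
      linarith
  set a : ℝ := c₁ * s₀ t with ha_def
  have hs02 : 2 ≤ s₀ t := le_trans (le_max_right _ _) hs₀low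
  have ha2 : 2 * c₁ ≤ a := by rw [ha_def]; nlinarith
  have ha0 : 0 < a := lt_of_lt_of_le (by linarith) ha2
  have ham : m * T ≤ a := by
    rcases le_or_gt T 3 with hT3 | hT3
    · have : m * T ≤ m * 3 := by nlinarith
      have hm3 : m * 3 = 2 * c₁ := by rw [hm_def]; ring
      linarith
    · have h1 : T - 1 ≤ s₀ t := le_trans (le_max_left _ _) hs₀low
      have h2 : c₁ * (T - 1) ≤ a := by rw [ha_def]; nlinarith
      have : m * T ≤ c₁ * (T - 1) := by rw [hm_def]; nlinarith
      linarith
  set b : ℝ := c₂ * s₁ t with hb_def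
  set D : ℝ := (n.factorial : ℝ) * (c₃ * t) ^ (-(n:ℝ)) with hD_def
  have hD : 0 < D := by
    rw [hD_def]
    have := Real.rpow_pos_of_pos (mul_pos hc₃ ht) (-(n:ℝ))
    positivity
  have hpt : ∀ s ∈ Set.Ioc a b,
      (1+s) ^ (-p) * Real.exp (-(c₃ * t * (1+s) ^ q)) ≤ D * s ^ (-r) := by
    intro s hs
    have hs0 : 0 < s := ha0.trans hs.1
    have h1s : (0:ℝ) < 1 + s := by linarith
    have hx : 0 < c₃ * t * (1+s) ^ q := by positivity
    have hexp := aux_exp_neg_le n hx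
    calc (1+s) ^ (-p) * Real.exp (-(c₃ * t * (1+s) ^ q))
        ≤ (1+s) ^ (-p) * ((n.factorial : ℝ) * (c₃ * t * (1+s) ^ q) ^ (-(n:ℝ))) :=
          mul_le_mul_of_nonneg_left hexp (Real.rpow_nonneg h1s.le _)
      _ = D * (1+s) ^ (-r) := by
          rw [hD_def, Real.mul_rpow (by positivity) (by positivity),
            ← Real.rpow_mul h1s.le]
          rw [show (1+s) ^ (-p) * ((n.factorial : ℝ) * ((c₃ * t) ^ (-(n:ℝ)) *
              (1+s) ^ (q * -(n:ℝ)))) =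
            ((n.factorial : ℝ) * (c₃ * t) ^ (-(n:ℝ))) *
              ((1+s) ^ (-p) * (1+s) ^ (q * -(n:ℝ))) from by ring,
            ← Real.rpow_add h1s, show -p + q * -(n:ℝ) = -r from by rw [hr_def]; ring]
      _ ≤ D * s ^ (-r) := by
          refine mul_le_mul_of_nonneg_left ?_ hD.le
          exact Real.rpow_le_rpow_of_nonpos hs0 (by linarith) (by linarith)
  have hIntBig : IntegrableOn (fun s : ℝ => D * s ^ (-r)) (Set.Ioi a) :=
    (integrableOn_Ioi_rpow_of_lt hr' ha0).const_mul D
  have hIntG : IntegrableOn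
      (fun s : ℝ => (1+s) ^ (-p) * Real.exp (-(c₃ * t * (1+s) ^ q)))
      (Set.Ioc a b) := by
    have h1 : ContinuousOn (fun s : ℝ => (1:ℝ) + s) (Set.Icc a b) :=
      (continuous_const.add continuous_id).continuousOn
    have hne : ∀ x ∈ Set.Icc a b, (1:ℝ) + x ≠ 0 ∨ 0 ≤ -p := by
      intro x hx
      exact Or.inl (ne_of_gt (by linarith [hx.1] : (0:ℝ) < 1 + x))
    have hne2 : ∀ x ∈ Set.Icc a b, (1:ℝ) + x ≠ 0 ∨ 0 ≤ q := by
      intro x hx; exact Or.inr hq.le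
    have hcont : ContinuousOn
        (fun s : ℝ => (1+s) ^ (-p) * Real.exp (-(c₃ * t * (1+s) ^ q)))
        (Set.Icc a b) := by
      refine (h1.rpow_const hne).mul ?_
      exact Real.continuous_exp.comp_continuousOn
        ((continuousOn_const.mul (h1.rpow_const hne2)).neg)
    exact hcont.integrableOn_Icc.mono_set Set.Ioc_subset_Icc_self
  have key : (∫ s in Set.Ioc a b, (1+s) ^ (-p) * Real.exp (-(c₃ * t * (1+s) ^ q)))
      ≤ D * (a ^ (1-r) / (r-1)) := by
    calc (∫ s in Set.Ioc a b, (1+s) ^ (-p) * Real.exp (-(c₃ * t * (1+s) ^ q)))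
        ≤ ∫ s in Set.Ioc a b, D * s ^ (-r) :=
          setIntegral_mono_on hIntG (hIntBig.mono_set Set.Ioc_subset_Ioi_self)
            measurableSet_Ioc hpt
      _ = D * ∫ s in Set.Ioc a b, s ^ (-r) := integral_const_mul D _
      _ ≤ D * (a ^ (1-r) / (r-1)) :=
          mul_le_mul_of_nonneg_left (aux_int r a b hr ha0) hD.le
  have hDa : D * (a ^ (1-r) / (r-1)) ≤ C' * t ^ ((p-1)/q) := by
    have h1 : a ^ (1-r) ≤ (m*T) ^ (1-r) :=
      Real.rpow_le_rpow_of_nonpos (by positivity) ham (by linarith)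
    have h2 : (m*T) ^ (1-r) = m ^ (1-r) * T ^ (1-r) := Real.mul_rpow hm.le hT0.le
    have h3 : T ^ (1-r) = t ^ (-(1/q) * (1-r)) := by
      rw [hT_def, ← Real.rpow_mul ht.le]
    have h4 : (c₃*t) ^ (-(n:ℝ)) = c₃ ^ (-(n:ℝ)) * t ^ (-(n:ℝ)) :=
      Real.mul_rpow hc₃.le ht.le
    have h5 : t ^ (-(n:ℝ)) * t ^ (-(1/q) * (1-r)) = t ^ ((p-1)/q) := by
      rw [← Real.rpow_add ht]
      congr 1
      rw [hr_def]
      field_simp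
      ring
    calc D * (a ^ (1-r) / (r-1))
        ≤ D * ((m*T) ^ (1-r) / (r-1)) := by
          refine mul_le_mul_of_nonneg_left ?_ hD.le
          exact div_le_div_of_nonneg_right h1 (by linarith)
      _ = C' * (t ^ (-(n:ℝ)) * t ^ (-(1/q) * (1-r))) := by
          rw [hD_def, h4, h2, h3, hC'_def]; ring
      _ = C' * t ^ ((p-1)/q) := by rw [h5]
  have hFt : t ^ ((p-1)/q) ≤ (1 + 1/Real.log 2) * F t := by
    rw [hF t]
    rcases lt_trichotomy p 1 with hp1 | hp1 | hp1
    · rw [if_pos hp1, show -(1-p)/q = (p-1)/q from by ring]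
      have h0 : 0 ≤ t ^ ((p-1)/q) := Real.rpow_nonneg ht.le _
      have hl : 0 ≤ 1/Real.log 2 := by positivity
      nlinarith
    · rw [if_neg (by linarith), if_neg (by linarith)]
      have he : (p-1)/q = 0 := by rw [hp1]; simp
      rw [he, Real.rpow_zero]
      have hti : 1 ≤ t⁻¹ := (one_le_inv₀ ht).mpr ht1
      have h2t : (2:ℝ) ≤ 1 + t⁻¹ := by linarith
      have hlog : Real.log 2 ≤ Real.log (1+t⁻¹) := Real.log_le_log (by norm_num) h2t
      have h1 : (1:ℝ) = Real.log 2 * (1/Real.log 2) := by field_simp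
      nlinarith
    · rw [if_neg (by linarith), if_pos hp1]
      have h1 : t ^ ((p-1)/q) ≤ 1 := Real.rpow_le_one ht.le ht1 (div_nonneg (by linarith) hq.le)
      have hl : 0 ≤ 1/Real.log 2 := by positivity
      linarith
  calc (∫ s in Set.Ioc a b, (1+s) ^ (-p) * Real.exp (-(c₃ * t * (1+s) ^ q)))
      ≤ D * (a ^ (1-r) / (r-1)) := key
    _ ≤ C' * t ^ ((p-1)/q) := hDa
    _ ≤ C' * ((1 + 1/Real.log 2) * F t) := mul_le_mul_of_nonneg_left hFt hC'.le
    _ = C' * (1 + 1/Real.log 2) * F t := by ring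
end

section
/- Let d ≥ 2 be an integer and α ∈ (0,2). There exists a constant C > 0, depending only on d and α, with the following property: for every a ∈ ℝ, every function f : ℝ → (0, 1/4], every x ∈ D and every r ≥ 1, ∫_{{z ∈ D : |z−x| ≥ r}} |x−z|^{−(d+α)} dz ≤ C·r^{−(d+α−1)}, where D := {z ∈ ℝ^d : z₁ > a and |z̃| < f(z₁)} and points of ℝ^d are written z = (z₁, z̃) with z̃ = (z₂, …, z_d) ∈ ℝ^{d−1}. -/
open MeasureTheory Set

lemma tail1d (p : ℝ) (hp : 1 < p) (R : ℝ) (hR : 0 < R) (c : ℝ) :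
    (∫⁻ t in {t : ℝ | R ≤ |t - c|}, ENNReal.ofReal (|t - c| ^ (-p))) ≤
      ENNReal.ofReal (2 * (R ^ (1 - p)) / (p - 1)) := by
  have hmeas : Measurable fun u : ℝ => ENNReal.ofReal (|u| ^ (-p)) :=
    (measurable_abs.pow_const (-p)).ennreal_ofReal
  -- translate by c
  have htrans :
      (∫⁻ t in {t : ℝ | R ≤ |t - c|}, ENNReal.ofReal (|t - c| ^ (-p))) =
        ∫⁻ u in {u : ℝ | R ≤ |u|}, ENNReal.ofReal (|u| ^ (-p)) := by
    have hmp : MeasurePreserving (fun u : ℝ => u + c) volume volume :=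
      measurePreserving_add_right volume c
    have := hmp.setLIntegral_comp_preimage_emb
      (measurableEmbedding_addRight c)
      (fun t => ENNReal.ofReal (|t - c| ^ (-p))) {t : ℝ | R ≤ |t - c|}
    rw [← this]
    have hpre : (fun u : ℝ => u + c) ⁻¹' {t : ℝ | R ≤ |t - c|} = {u : ℝ | R ≤ |u|} := by
      ext u; simp
    rw [hpre]
    refine setLIntegral_congr_fun ?_ (fun u _ => by simp) ;
    · exact measurableSet_le measurable_const measurable_abs
  rw [htrans]
  -- split
  have hsplit : {u : ℝ | R ≤ |u|} = Iic (-R) ∪ Ici R := by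
    ext u
    simp only [mem_setOf_eq, le_abs, Set.mem_union, mem_Iic, mem_Ici]
    constructor
    · rintro (h|h); exacts [Or.inr h, Or.inl (by linarith)]
    · rintro (h|h); exacts [Or.inr (by linarith), Or.inl h]
  rw [hsplit]
  have hIci : (∫⁻ u in Ici R, ENNReal.ofReal (|u| ^ (-p))) =
      ENNReal.ofReal (R ^ (1 - p) / (p - 1)) := by
    rw [setLIntegral_congr Ioi_ae_eq_Ici.symm]
    have h1 : (∫⁻ u in Ioi R, ENNReal.ofReal (|u| ^ (-p))) =
        ∫⁻ u in Ioi R, ENNReal.ofReal (u ^ (-p)) := by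
      refine setLIntegral_congr_fun measurableSet_Ioi (fun u hu => ?_)
      rw [abs_of_pos (hR.trans hu)]
    rw [h1]
    rw [← ofReal_integral_eq_lintegral_ofReal
      (integrableOn_Ioi_rpow_of_lt (by linarith) hR)
      ((ae_restrict_iff' measurableSet_Ioi).2 (ae_of_all _ fun u hu =>
        Real.rpow_nonneg (le_of_lt (hR.trans hu)) _))]
    rw [integral_Ioi_rpow_of_lt (by linarith) hR]
    congr 1
    rw [show -p + 1 = -(p-1) by ring, show (1 : ℝ) - p = -(p-1) by ring]
    rw [neg_div, div_neg, neg_neg]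
  have hIic : (∫⁻ u in Iic (-R), ENNReal.ofReal (|u| ^ (-p))) =
      ∫⁻ u in Ici R, ENNReal.ofReal (|u| ^ (-p)) := by
    have hmp : MeasurePreserving (fun u : ℝ => -u) volume volume :=
      Measure.measurePreserving_neg volume
    have := hmp.setLIntegral_comp_preimage_emb
      (MeasurableEquiv.neg ℝ).measurableEmbedding
      (fun u => ENNReal.ofReal (|u| ^ (-p))) (Iic (-R))
    rw [← this]
    have hpre : (fun u : ℝ => -u) ⁻¹' Iic (-R) = Ici R := by
      ext u; simp
    rw [hpre]
    simp [abs_neg]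
  calc (∫⁻ u in Iic (-R) ∪ Ici R, ENNReal.ofReal (|u| ^ (-p)))
      ≤ (∫⁻ u in Iic (-R), ENNReal.ofReal (|u| ^ (-p))) +
        ∫⁻ u in Ici R, ENNReal.ofReal (|u| ^ (-p)) := lintegral_union_le _ _ _
    _ = ENNReal.ofReal (R ^ (1 - p) / (p - 1)) + ENNReal.ofReal (R ^ (1 - p) / (p - 1)) := by
        rw [hIic, hIci]
    _ ≤ ENNReal.ofReal (2 * (R ^ (1 - p)) / (p - 1)) := by
        rw [← ENNReal.ofReal_add (div_nonneg (by positivity) (by linarith)) (div_nonneg (by positivity) (by linarith))]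
        apply ENNReal.ofReal_le_ofReal
        rw [mul_div_assoc]
        ring_nf
        exact le_refl _

set_option maxHeartbeats 1000000 in
/-- There is a constant `C > 0` depending only on `d ≥ 2` and `α ∈ (0,2)` such that,
for every model horn region `D = {z ∈ ℝ^d : z₁ > a, ‖z̃‖ < f z₁}` with
`f : ℝ → (0, 1/4]`, every `x ∈ D` and every `r ≥ 1`,
`∫_{z ∈ D, |z - x| ≥ r} |x - z|^(-(d+α)) dz ≤ C * r^(-(d+α-1))`. -/
theorem stmt16 (d : ℕ) (hd : 2 ≤ d) (α : ℝ) (hα0 : 0 < α) (hα2 : α < 2) :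
    ∃ C : ℝ, 0 < C ∧
      ∀ (i0 : Fin d), (i0 : ℕ) = 0 →
      ∀ (a : ℝ) (f : ℝ → ℝ), (∀ s : ℝ, 0 < f s) → (∀ s : ℝ, f s ≤ 1 / 4) →
      ∀ (D : Set (EuclideanSpace ℝ (Fin d))),
        D = {z : EuclideanSpace ℝ (Fin d) | a < z i0 ∧
          Real.sqrt (∑ i ∈ Finset.univ.erase i0, z i ^ 2) < f (z i0)} →
      ∀ x ∈ D, ∀ r : ℝ, 1 ≤ r →
        (∫⁻ z in {z ∈ D | r ≤ dist z x},
            ENNReal.ofReal (‖x - z‖ ^ (-((d : ℝ) + α)))) ≤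
          ENNReal.ofReal (C * r ^ (-((d : ℝ) + α - 1))) := by
  obtain ⟨n, rfl⟩ : ∃ n, d = n + 1 := ⟨d - 1, by omega⟩
  have hn : 1 ≤ n := by omega
  have hn' : (1:ℝ) ≤ n := by exact_mod_cast hn
  set p : ℝ := ((n + 1 : ℕ) : ℝ) + α with hpdef
  have hp1 : 1 < p := by rw [hpdef]; push_cast; linarith
  have hp0 : 0 < p := by linarith
  refine ⟨2 ^ (n + 3) / (p - 1), div_pos (by positivity) (by linarith), ?_⟩
  intro i0 hi0 a f hf0 hf4 D hD x hx r hr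
  have hr0 : (0:ℝ) < r := by linarith
  set c : ℝ := x i0 with hc
  have key : ∀ y : EuclideanSpace ℝ (Fin (n + 1)), y ∈ D →
      ∑ i ∈ Finset.univ.erase i0, y i ^ 2 < 1 / 16 := by
    intro y hy
    rw [hD] at hy
    have h1 : Real.sqrt (∑ i ∈ Finset.univ.erase i0, y i ^ 2) < 1 / 4 :=
      lt_of_lt_of_le hy.2 (hf4 _)
    have h2 := (Real.sqrt_lt' (by norm_num : (0:ℝ) < 1 / 4)).mp h1
    nlinarith [h2]
  have keyx := key x hx
  set φ := (MeasurableEquiv.toLp 2 (Fin (n + 1) → ℝ)).symm with hφdef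
  have hφ := EuclideanSpace.volume_preserving_symm_measurableEquiv_toLp (Fin (n + 1))
  set e := MeasurableEquiv.piFinSuccAbove (fun _ : Fin (n + 1) => ℝ) i0 with hedef
  have he := volume_preserving_piFinSuccAbove (fun _ : Fin (n + 1) => ℝ) i0
  set S₁ : Set ℝ := {t : ℝ | r / 2 ≤ |t - c|} with hS₁
  set T : Set (Fin n → ℝ) := univ.pi fun _ => Ioo (-(1/4) : ℝ) (1/4) with hT
  set B : Set (EuclideanSpace ℝ (Fin (n + 1))) := φ ⁻¹' (e ⁻¹' (S₁ ×ˢ T)) with hB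
  have hmemB : ∀ z : EuclideanSpace ℝ (Fin (n + 1)),
      z ∈ B ↔ (r / 2 ≤ |z i0 - c| ∧ ∀ j : Fin n, z (i0.succAbove j) ∈ Ioo (-(1/4) : ℝ) (1/4)) := by
    intro z
    constructor
    · rintro ⟨h1, h2⟩
      exact ⟨h1, fun j => h2 j (mem_univ j)⟩
    · rintro ⟨h1, h2⟩
      exact ⟨h1, fun j _ => h2 j⟩
  have hEB : {z | z ∈ D ∧ r ≤ dist z x} ⊆ B := by
    intro z hz
    obtain ⟨hzD, hzr⟩ := hz
    have keyz := key z hzD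
    rw [hmemB]
    constructor
    · have hdist : r ≤ Real.sqrt (∑ i, (z i - x i) ^ 2) := by
        rw [EuclideanSpace.dist_eq] at hzr
        simpa [Real.dist_eq, sq_abs] using hzr
      have hsum : r ^ 2 ≤ ∑ i, (z i - x i) ^ 2 := by
        have h2 := pow_le_pow_left₀ (le_of_lt hr0) hdist 2
        rwa [Real.sq_sqrt (Finset.sum_nonneg fun i _ => sq_nonneg _)] at h2
      have hsplit : (z i0 - x i0) ^ 2 + ∑ i ∈ Finset.univ.erase i0, (z i - x i) ^ 2 =
          ∑ i, (z i - x i) ^ 2 :=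
        Finset.add_sum_erase Finset.univ (fun i => (z i - x i) ^ 2) (Finset.mem_univ i0)
      have htail : ∑ i ∈ Finset.univ.erase i0, (z i - x i) ^ 2 ≤
          2 * (∑ i ∈ Finset.univ.erase i0, z i ^ 2) +
          2 * (∑ i ∈ Finset.univ.erase i0, x i ^ 2) := by
        rw [Finset.mul_sum, Finset.mul_sum, ← Finset.sum_add_distrib]
        exact Finset.sum_le_sum fun i _ => by nlinarith [sq_nonneg (z i + x i)]
      have hbig : r ^ 2 - 1 / 4 ≤ (z i0 - x i0) ^ 2 := by nlinarith
      by_contra habs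
      push_neg at habs
      rw [hc] at habs
      nlinarith [abs_nonneg (z i0 - x i0), sq_abs (z i0 - x i0), habs, hbig, hr]
    · intro j
      have hne : i0.succAbove j ≠ i0 := Fin.succAbove_ne i0 j
      have hmem : i0.succAbove j ∈ Finset.univ.erase i0 :=
        Finset.mem_erase.mpr ⟨hne, Finset.mem_univ _⟩
      have hle : z (i0.succAbove j) ^ 2 ≤ ∑ i ∈ Finset.univ.erase i0, z i ^ 2 :=
        Finset.single_le_sum (fun i _ => sq_nonneg (z i)) hmem
      constructor <;> nlinarith
  have hptwise : ∀ z ∈ B, ENNReal.ofReal (‖x - z‖ ^ (-p)) ≤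
      ENNReal.ofReal (|z i0 - c| ^ (-p)) := by
    intro z hz
    rw [hmemB] at hz
    have h2 : (0:ℝ) < |z i0 - c| := lt_of_lt_of_le (by linarith) hz.1
    have h1 : |z i0 - c| ≤ ‖x - z‖ := by
      have hswap : |z i0 - c| = |x i0 - z i0| := by rw [hc, abs_sub_comm]
      rw [EuclideanSpace.norm_eq, hswap, ← Real.sqrt_sq_eq_abs]
      apply Real.sqrt_le_sqrt
      calc (x i0 - z i0) ^ 2 = ‖(x - z) i0‖ ^ 2 := by
            rw [Real.norm_eq_abs, sq_abs]; simp
        _ ≤ ∑ i, ‖(x - z) i‖ ^ 2 :=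
          Finset.single_le_sum (f := fun i => ‖(x - z) i‖ ^ 2)
            (fun i _ => sq_nonneg _) (Finset.mem_univ i0)
    exact ENNReal.ofReal_le_ofReal
      (Real.rpow_le_rpow_of_nonpos h2 h1 (by linarith))
  have hmeas_h : Measurable fun t : ℝ => ENNReal.ofReal (|t - c| ^ (-p)) :=
    ((measurable_id.sub_const c).abs.pow_const (-p)).ennreal_ofReal
  have hzc : Measurable fun z : EuclideanSpace ℝ (Fin (n + 1)) => z i0 :=
    (measurable_pi_apply i0).comp (PiLp.volume_preserving_ofLp (Fin (n + 1))).measurable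
  calc (∫⁻ z in {z | z ∈ D ∧ r ≤ dist z x}, ENNReal.ofReal (‖x - z‖ ^ (-p)))
      ≤ ∫⁻ z in B, ENNReal.ofReal (‖x - z‖ ^ (-p)) := lintegral_mono_set hEB
    _ ≤ ∫⁻ z in B, ENNReal.ofReal (|z i0 - c| ^ (-p)) :=
        setLIntegral_mono (hmeas_h.comp hzc) hptwise
    _ = ∫⁻ y in e ⁻¹' (S₁ ×ˢ T), ENNReal.ofReal (|y i0 - c| ^ (-p)) :=
        hφ.setLIntegral_comp_preimage_emb φ.measurableEmbedding
          (fun y => ENNReal.ofReal (|y i0 - c| ^ (-p))) _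
    _ = ∫⁻ q in S₁ ×ˢ T, ENNReal.ofReal (|q.1 - c| ^ (-p)) :=
        he.setLIntegral_comp_preimage_emb e.measurableEmbedding
          (fun q => ENNReal.ofReal (|q.1 - c| ^ (-p))) _
    _ = (∫⁻ t in S₁, ENNReal.ofReal (|t - c| ^ (-p))) * volume T := by
        rw [MeasureTheory.Measure.volume_eq_prod, ← Measure.prod_restrict]
        have := lintegral_prod_mul (μ := volume.restrict S₁) (ν := volume.restrict T)
          hmeas_h.aemeasurable (aemeasurable_const (b := (1 : ENNReal)))
        simpa using this
    _ ≤ (∫⁻ t in S₁, ENNReal.ofReal (|t - c| ^ (-p))) * 1 := by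
        gcongr
        rw [hT, volume_pi_pi]
        exact Finset.prod_le_one (fun i _ => zero_le) (fun i _ => by
          rw [Real.volume_Ioo]
          exact ENNReal.ofReal_le_one.mpr (by norm_num))
    _ ≤ ENNReal.ofReal (2 * ((r/2) ^ (1 - p)) / (p - 1)) := by
        rw [mul_one]
        exact tail1d p hp1 (r/2) (by linarith) c
    _ ≤ ENNReal.ofReal (2 ^ (n + 3) / (p - 1) * r ^ (-(p - 1))) := by
        apply ENNReal.ofReal_le_ofReal
        have hfact : (r/2) ^ ((1:ℝ) - p) = r ^ (-(p-1)) * (2:ℝ) ^ (p - 1) := by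
          rw [show (1:ℝ) - p = -(p-1) by ring,
            Real.div_rpow (by linarith) (by norm_num),
            Real.rpow_neg (by norm_num : (0:ℝ) ≤ 2), div_inv_eq_mul]
        have h2p : (2:ℝ) ^ (p - 1) ≤ 2 ^ ((n:ℝ) + 2) := by
          apply Real.rpow_le_rpow_of_exponent_le (by norm_num)
          rw [hpdef]; push_cast; linarith
        have h2n : (2:ℝ) ^ ((n:ℝ) + 2) = 2 ^ (n + 2 : ℕ) := by
          rw [← Real.rpow_natCast 2 (n + 2)]; push_cast; ring_nf
        have hrpos : (0:ℝ) ≤ r ^ (-(p-1)) := Real.rpow_nonneg (by linarith) _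
        have h2 : 2 * ((r/2) ^ ((1:ℝ) - p)) ≤ 2 ^ (n + 3) * r ^ (-(p-1)) := by
          rw [hfact]
          have hpow : (0:ℝ) < 2 ^ (n + 2 : ℕ) := by positivity
          calc 2 * (r ^ (-(p-1)) * (2:ℝ) ^ (p - 1))
              ≤ 2 * (r ^ (-(p-1)) * 2 ^ (n + 2 : ℕ)) := by
                rw [← h2n]; nlinarith
            _ = 2 ^ (n + 3) * r ^ (-(p-1)) := by ring
        calc 2 * ((r/2) ^ ((1:ℝ) - p)) / (p - 1)
            ≤ 2 ^ (n + 3) * r ^ (-(p-1)) / (p - 1) := by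
              apply div_le_div_of_nonneg_right h2 (by linarith) |>.trans_eq rfl
          _ = 2 ^ (n + 3) / (p - 1) * r ^ (-(p-1)) := by ring
end

section
/- Let d ≥ 2 be an integer and α ∈ (0,2). There exists a constant c > 0, depending only on d and α, with the following property: for every a ∈ ℝ, every non-increasing function f : ℝ → (0, 1/4], and every z ∈ D, ∫_{ℝ^d \ D} |z−y|^{−(d+α)} dy ≥ c·f(z₁)^{−α}, where D := {y ∈ ℝ^d : y₁ > a and |ỹ| < f(y₁)} and points of ℝ^d are written y = (y₁, ỹ) with ỹ = (y₂, …, y_d) ∈ ℝ^{d−1}. -/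
open MeasureTheory

section aux

variable {d : ℕ} (i0 : Fin d)

noncomputable def projAux (x : EuclideanSpace ℝ (Fin d)) : EuclideanSpace ℝ (Fin d) :=
  WithLp.toLp 2 fun i => if i = i0 then 0 else x i

lemma projAux_sub (x y : EuclideanSpace ℝ (Fin d)) :
    projAux i0 (x - y) = projAux i0 x - projAux i0 y := by
  ext i
  simp only [projAux, PiLp.sub_apply, PiLp.toLp_apply]
  split <;> simp

lemma euclid_norm_sq (x : EuclideanSpace ℝ (Fin d)) :
    ‖x‖ = Real.sqrt (∑ i, x i ^ 2) := by
  rw [EuclideanSpace.norm_eq]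
  congr 1
  exact Finset.sum_congr rfl fun i _ => by rw [Real.norm_eq_abs, sq_abs]

lemma norm_projAux (x : EuclideanSpace ℝ (Fin d)) :
    ‖projAux i0 x‖ = Real.sqrt (∑ i ∈ Finset.univ.erase i0, x i ^ 2) := by
  rw [euclid_norm_sq]
  congr 1
  rw [← Finset.add_sum_erase _ _ (Finset.mem_univ i0)]
  have h2 : ∀ i ∈ Finset.univ.erase i0, projAux i0 x i ^ 2 = x i ^ 2 := fun i hi => by
    simp [projAux, Finset.ne_of_mem_erase hi]
  rw [Finset.sum_congr rfl h2]
  simp [projAux]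

lemma norm_projAux_le (x : EuclideanSpace ℝ (Fin d)) : ‖projAux i0 x‖ ≤ ‖x‖ := by
  rw [euclid_norm_sq, euclid_norm_sq]
  apply Real.sqrt_le_sqrt
  refine Finset.sum_le_sum fun i _ => ?_
  simp only [projAux]
  split
  · next h => simp [h]; positivity
  · exact le_of_eq rfl

lemma abs_coord_le (x : EuclideanSpace ℝ (Fin d)) (i : Fin d) : |x i| ≤ ‖x‖ := by
  rw [euclid_norm_sq, ← Real.sqrt_sq_eq_abs]
  exact Real.sqrt_le_sqrt (Finset.single_le_sum
    (f := fun j => x j ^ 2) (fun j _ => by positivity) (Finset.mem_univ i))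

lemma decomp_norm_le (x : EuclideanSpace ℝ (Fin d)) :
    ‖x‖ ≤ |x i0| + ‖projAux i0 x‖ := by
  have hx : x = EuclideanSpace.single i0 (x i0) + projAux i0 x := by
    ext i
    simp only [PiLp.add_apply, EuclideanSpace.single_apply, projAux, PiLp.toLp_apply]
    by_cases h : i = i0
    · subst h; simp
    · simp [h]
  calc ‖x‖ = ‖EuclideanSpace.single i0 (x i0) + projAux i0 x‖ := by rw [← hx]
    _ ≤ ‖EuclideanSpace.single i0 (x i0)‖ + ‖projAux i0 x‖ := norm_add_le _ _
    _ = |x i0| + ‖projAux i0 x‖ := by rw [EuclideanSpace.norm_single]; rfl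

end aux

/-- There is a constant `c > 0` depending only on `d ≥ 2` and `α ∈ (0,2)` such that,
for every model horn region `D = {y ∈ ℝ^d : y₁ > a, ‖ỹ‖ < f y₁}` with
`f : ℝ → (0, 1/4]` non-increasing, and every `z ∈ D`,
`∫_{ℝ^d \ D} |z - y|^(-(d+α)) dy ≥ c * f (z₁) ^ (-α)`. -/
theorem stmt17 (d : ℕ) (hd : 2 ≤ d) (α : ℝ) (hα0 : 0 < α) (hα2 : α < 2) :
    ∃ c : ℝ, 0 < c ∧
      ∀ (i0 : Fin d), (i0 : ℕ) = 0 →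
      ∀ (a : ℝ) (f : ℝ → ℝ), (∀ s : ℝ, 0 < f s) → (∀ s : ℝ, f s ≤ 1 / 4) →
        (∀ u v : ℝ, u ≤ v → f v ≤ f u) →
      ∀ (D : Set (EuclideanSpace ℝ (Fin d))),
        D = {y : EuclideanSpace ℝ (Fin d) | a < y i0 ∧
          Real.sqrt (∑ i ∈ Finset.univ.erase i0, y i ^ 2) < f (y i0)} →
      ∀ z ∈ D,
        ENNReal.ofReal (c * f (z i0) ^ (-α)) ≤
          ∫⁻ y in Dᶜ, ENNReal.ofReal (‖z - y‖ ^ (-((d : ℝ) + α))) := by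
  set κ : ENNReal := volume (Metric.ball (0 : EuclideanSpace ℝ (Fin d)) 1) with hκ
  have hdpos : 0 < d := by omega
  haveI : Nonempty (Fin d) := ⟨⟨0, hdpos⟩⟩
  have hκpos : 0 < κ.toReal := by
    apply ENNReal.toReal_pos
    · exact (Metric.measure_ball_pos _ _ (by norm_num)).ne'
    · exact measure_ball_lt_top.ne
  have h6 : (0:ℝ) < (6:ℝ) ^ (-((d:ℝ) + α)) := Real.rpow_pos_of_pos (by norm_num) _
  refine ⟨κ.toReal * (6:ℝ) ^ (-((d:ℝ) + α)), by positivity, ?_⟩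
  intro i0 hi0 a f hf0 hf4 hmono D hD z hz
  set F : ℝ := f (z i0) with hFdef
  have hF : 0 < F := hf0 _
  rw [hD] at hz
  obtain ⟨hza, hzt⟩ := hz
  have hzt' : ‖projAux i0 z‖ < F := by rwa [norm_projAux]
  -- the auxiliary direction i1
  have h1d : 1 < d := by omega
  set i1 : Fin d := ⟨1, h1d⟩ with hi1def
  have hi10 : i1 ≠ i0 := by
    intro h; apply absurd hi0; rw [← h]; simp [hi1def]
  -- the center w
  set w : EuclideanSpace ℝ (Fin d) :=
    WithLp.toLp 2 fun i => if i = i0 then z i0 + F else if i = i1 then 3*F else 0 with hw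
  have hwi0 : w i0 = z i0 + F := by simp [hw]
  have hprojw : projAux i0 w = EuclideanSpace.single i1 (3*F) := by
    ext i
    simp only [projAux, hw, EuclideanSpace.single_apply, PiLp.toLp_apply]
    by_cases h : i = i0
    · subst h; rw [if_pos rfl, if_neg hi10.symm]
    · rw [if_neg h, if_neg h]
  have hnormw : ‖projAux i0 w‖ = 3*F := by
    rw [hprojw, EuclideanSpace.norm_single, Real.norm_eq_abs, abs_of_pos (by linarith)]
  set B : Set (EuclideanSpace ℝ (Fin d)) := Metric.ball w F with hB
  -- facts about points of B
  have hBfacts : ∀ y ∈ B, z i0 ≤ y i0 ∧ 2*F < ‖projAux i0 y‖ ∧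
      0 < ‖z - y‖ ∧ ‖z - y‖ ≤ 6*F := by
    intro y hy
    have hyw : ‖y - w‖ < F := by rwa [Metric.mem_ball, dist_eq_norm] at hy
    have hcoord : |y i0 - w i0| ≤ ‖y - w‖ := by
      have := abs_coord_le (y - w) i0
      rwa [PiLp.sub_apply] at this
    have hyi0 : z i0 ≤ y i0 := by
      rw [hwi0] at hcoord
      have := abs_le.mp (hcoord.trans hyw.le)
      linarith [this.1]
    have hproj_sub : ‖projAux i0 y - projAux i0 w‖ ≤ ‖y - w‖ := by
      rw [← projAux_sub]; exact norm_projAux_le _ _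
    have hpy : 2*F < ‖projAux i0 y‖ := by
      have h1 : ‖projAux i0 w‖ - ‖projAux i0 y‖ ≤ ‖y - w‖ := by
        calc ‖projAux i0 w‖ - ‖projAux i0 y‖ ≤ ‖projAux i0 y - projAux i0 w‖ := by
              have := norm_sub_norm_le (projAux i0 w) (projAux i0 y)
              rw [norm_sub_rev] at this; linarith [le_abs_self (‖projAux i0 w‖ - ‖projAux i0 y‖)]
          _ ≤ ‖y - w‖ := hproj_sub
      rw [hnormw] at h1; linarith
    have hlow : F < ‖z - y‖ := by
      have h2 : ‖projAux i0 z - projAux i0 y‖ ≤ ‖z - y‖ := by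
        rw [← projAux_sub]; exact norm_projAux_le _ _
      have h3 : ‖projAux i0 y‖ - ‖projAux i0 z‖ ≤ ‖projAux i0 z - projAux i0 y‖ := by
        rw [norm_sub_rev]
        linarith [norm_sub_norm_le (projAux i0 y) (projAux i0 z),
          le_abs_self (‖projAux i0 y‖ - ‖projAux i0 z‖)]
      linarith
    have hzw : ‖z - w‖ ≤ 5*F := by
      have h4 := decomp_norm_le i0 (z - w)
      have h5 : (z - w) i0 = -F := by rw [PiLp.sub_apply, hwi0]; ring
      have h6' : ‖projAux i0 (z - w)‖ ≤ 4*F := by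
        rw [projAux_sub]
        calc ‖projAux i0 z - projAux i0 w‖ ≤ ‖projAux i0 z‖ + ‖projAux i0 w‖ := norm_sub_le _ _
          _ ≤ 4*F := by rw [hnormw]; linarith
      rw [h5] at h4
      rw [abs_neg, abs_of_pos hF] at h4
      linarith
    have hup : ‖z - y‖ ≤ 6*F := by
      calc ‖z - y‖ = ‖(z - w) + (w - y)‖ := by congr 1; abel
        _ ≤ ‖z - w‖ + ‖w - y‖ := norm_add_le _ _
        _ ≤ 5*F + F := by rw [← norm_neg (w - y), neg_sub]; linarith
        _ = 6*F := by ring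
    exact ⟨hyi0, hpy, by linarith, hup⟩
  -- B ⊆ Dᶜ
  have hsub : B ⊆ Dᶜ := by
    intro y hy
    obtain ⟨hyi0, hpy, -, -⟩ := hBfacts y hy
    rw [hD]
    intro hyD
    have h2 := hyD.2
    rw [← norm_projAux] at h2
    have : f (y i0) ≤ F := hmono _ _ hyi0
    linarith
  -- volume of B
  have hvol : volume B = ENNReal.ofReal (F ^ d) * κ := by
    rw [hB, Measure.addHaar_ball volume w hF.le, finrank_euclideanSpace_fin]
  -- main real computation
  have hreal : κ.toReal * (6:ℝ) ^ (-((d:ℝ) + α)) * F ^ (-α)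
      = (6*F) ^ (-((d:ℝ) + α)) * (F ^ d * κ.toReal) := by
    rw [Real.mul_rpow (by norm_num) hF.le]
    have h7 : (F:ℝ) ^ d = F ^ ((d:ℝ)) := (Real.rpow_natCast F d).symm
    rw [h7]
    have h8 : F ^ (-((d:ℝ) + α)) * F ^ ((d:ℝ)) = F ^ (-α) := by
      rw [← Real.rpow_add hF]; ring_nf
    rw [← h8]; ring
  calc ENNReal.ofReal (κ.toReal * (6:ℝ) ^ (-((d:ℝ) + α)) * F ^ (-α))
      = ENNReal.ofReal ((6*F) ^ (-((d:ℝ) + α))) * volume B := by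
        rw [hvol, hreal,
          show (F:ℝ) ^ d * κ.toReal = (ENNReal.ofReal (F^d) * κ).toReal by
            rw [ENNReal.toReal_mul, ENNReal.toReal_ofReal (by positivity)],
          ENNReal.ofReal_mul (by positivity),
          ENNReal.ofReal_toReal (by
            exact ENNReal.mul_ne_top ENNReal.ofReal_ne_top measure_ball_lt_top.ne)]
    _ = ∫⁻ _ in B, ENNReal.ofReal ((6*F) ^ (-((d:ℝ) + α))) := (setLIntegral_const _ _).symm
    _ ≤ ∫⁻ y in B, ENNReal.ofReal (‖z - y‖ ^ (-((d:ℝ) + α))) := by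
        refine setLIntegral_mono' measurableSet_ball fun y hy => ?_
        obtain ⟨-, -, hpos, hle⟩ := hBfacts y hy
        exact ENNReal.ofReal_le_ofReal
          (Real.rpow_le_rpow_of_nonpos hpos hle (neg_nonpos.mpr (by positivity)))
    _ ≤ ∫⁻ y in Dᶜ, ENNReal.ofReal (‖z - y‖ ^ (-((d:ℝ) + α))) := lintegral_mono_set hsub
end
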